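/- arXiv:1804.01752 — 4 statements merged into one kernel-verified Lean document; each statement's English description precedes it below -/
import Mathlib

section
/- Let (Ω, F, P) be a probability space with a filtration (F_t)_{t∈[0,T]}, let U be a real separable Hilbert space, and let R : U → U be an injective bounded linear operator with dense range. Then for every progressively measurable process v : Ω × [0,T] → U with E∫_0^T ‖v_t‖² dt < ∞ and every ε > 0 there exists a progressively measurable process α : Ω × [0,T] → U which is uniformly bounded (i.e. ‖α_t(ω)‖ ≤ n for some n ∈ ℕ and all (ω,t)) such that E∫_0^T ‖v_t − ∫_0^t R α_s ds‖² dt < ε. In other words, the linear space of processes of the form (∫_0^t R α_s ds)_{t∈[0,T]}, with α progressively measurable and uniformly bounded, is dense in the space of square-integrable progressively measurable U-valued processes on [0,T]. -/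
set_option linter.unusedSectionVars false

open MeasureTheory Filter Set
open scoped ENNReal NNReal Topology

set_option maxHeartbeats 1000000

section Aux

variable {Ω U : Type*} {mΩ : MeasurableSpace Ω}
  [NormedAddCommGroup U] [NormedSpace ℝ U]
  [CompleteSpace U] [SecondCountableTopology U]
  [MeasurableSpace U] [BorelSpace U]
  {𝓕 : Filtration ℝ mΩ}

private lemma lintegral_Icc_congr {T : ℝ} {f g : ℝ → ℝ≥0∞}
    (h : ∀ t ∈ Icc (0:ℝ) T, f t = g t) :
    ∫⁻ t in Icc (0:ℝ) T, f t = ∫⁻ t in Icc (0:ℝ) T, g t :=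
  lintegral_congr_ae ((ae_restrict_iff' measurableSet_Icc).2 (Eventually.of_forall h))

private lemma prog_shift {w : ℝ → Ω → U} (hw : ProgMeasurable 𝓕 w) {h : ℝ} (hh : 0 ≤ h) :
    ProgMeasurable 𝓕 fun s ω => w (s - h) ω := by
  intro i
  have heq : (fun p : Iic i × Ω => w ((p.1 : ℝ) - h) p.2)
      = (fun q : Iic i × Ω => w (q.1 : ℝ) q.2) ∘
        (fun p : Iic i × Ω =>
          ((⟨(p.1:ℝ) - h, mem_Iic.2 (by linarith [mem_Iic.1 p.1.2])⟩ : Iic i), p.2)) := rfl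
  rw [heq]
  exact (hw i).comp_measurable
    ((((measurable_subtype_coe.comp measurable_fst).sub measurable_const).subtype_mk).prodMk
      measurable_snd)

private lemma prog_min_comp {v : ℝ → Ω → U} (hv : ProgMeasurable 𝓕 v) (T : ℝ) :
    ProgMeasurable 𝓕 fun s ω => v (min s T) ω := by
  intro i
  have heq : (fun p : Iic i × Ω => v (min (p.1 : ℝ) T) p.2)
      = (fun q : Iic i × Ω => v (q.1 : ℝ) q.2) ∘
        (fun p : Iic i × Ω =>
          ((⟨min (p.1:ℝ) T, mem_Iic.2 (le_trans (min_le_left _ _) (mem_Iic.1 p.1.2))⟩ : Iic i),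
            p.2)) := rfl
  rw [heq]
  exact (hv i).comp_measurable
    ((((measurable_subtype_coe.comp measurable_fst).min measurable_const).subtype_mk).prodMk
      measurable_snd)

private lemma prog_indicator {w : ℝ → Ω → U} (hw : ProgMeasurable 𝓕 w) (T : ℝ) :
    ProgMeasurable 𝓕 fun s ω => (Icc (0:ℝ) T).indicator (fun s' => w s' ω) s := by
  intro i
  have heq : (fun p : Iic i × Ω => (Icc (0:ℝ) T).indicator (fun s' => w s' p.2) (p.1:ℝ))
      = Set.indicator {p : Iic i × Ω | (p.1:ℝ) ∈ Icc (0:ℝ) T}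
          (fun p : Iic i × Ω => w (p.1:ℝ) p.2) := by
    funext p
    simp only [Set.indicator_apply, Set.mem_setOf_eq]
  rw [heq]
  exact (hw i).indicator ((measurable_subtype_coe.comp measurable_fst) measurableSet_Icc)

private lemma prog_comp_meas {w : ℝ → Ω → U} (hw : ProgMeasurable 𝓕 w)
    {ρ : U → U} (hρ : Measurable ρ) : ProgMeasurable 𝓕 fun s ω => ρ (w s ω) :=
  fun i => (hρ.comp (hw i).measurable).stronglyMeasurable

private lemma integrable_of_bdd_supp {f : ℝ → U} (hf : StronglyMeasurable f) {c a b : ℝ}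
    (hb : ∀ s, ‖f s‖ ≤ c) (hs : ∀ s, s ∉ Icc a b → f s = 0) : Integrable f := by
  have hfeq : f = (Icc a b).indicator f := by
    refine (Set.indicator_eq_self.2 ?_).symm
    intro s hsupp
    by_contra hmem
    exact hsupp (hs s hmem)
  rw [hfeq, integrable_indicator_iff measurableSet_Icc]
  exact Integrable.mono' (integrableOn_const measure_Icc_lt_top.ne)
    hf.aestronglyMeasurable.restrict (Eventually.of_forall hb)

end Aux


section Aux2

variable {Ω U : Type*} {mΩ : MeasurableSpace Ω}
  [NormedAddCommGroup U] [NormedSpace ℝ U]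
  [CompleteSpace U] [SecondCountableTopology U]
  [MeasurableSpace U] [BorelSpace U]
  {𝓕 : Filtration ℝ mΩ}

private lemma integrable_of_bdd_supp' {f : ℝ → U} (hf : StronglyMeasurable f) {c a b : ℝ}
    (hb : ∀ s, ‖f s‖ ≤ c) (hs : ∀ s, s ∉ Icc a b → f s = 0) : Integrable f := by
  have hfeq : f = (Icc a b).indicator f := by
    refine (Set.indicator_eq_self.2 ?_).symm
    intro s hsupp
    by_contra hmem
    exact hsupp (hs s hmem)
  rw [hfeq, integrable_indicator_iff measurableSet_Icc]
  exact Integrable.mono' (integrableOn_const measure_Icc_lt_top.ne)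
    hf.aestronglyMeasurable.restrict (Eventually.of_forall hb)

private lemma sm_integral_param {V : Type*} [NormedAddCommGroup V] [NormedSpace ℝ V]
    {Ω' : Type*} (mΩ' : MeasurableSpace Ω') {f : Ω' × ℝ → V}
    (hf : StronglyMeasurable f) (ν : Measure ℝ) [SFinite ν] :
    StronglyMeasurable fun ω => ∫ s, f (ω, s) ∂ν :=
  hf.integral_prod_right'

private lemma primitive_props {g : ℝ → Ω → U} (hg : ProgMeasurable 𝓕 g)
    {c T' : ℝ} (hgb : ∀ s ω, ‖g s ω‖ ≤ c) (hsupp : ∀ s ω, s ∉ Icc (0:ℝ) T' → g s ω = 0) :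
    (∀ ω, Integrable (fun s => g s ω) volume) ∧
    (∀ ω, Continuous fun t => ∫ s in (0:ℝ)..t, g s ω) ∧
    ProgMeasurable 𝓕 (fun t ω => ∫ s in (0:ℝ)..t, g s ω) ∧
    StronglyMeasurable (fun p : Ω × ℝ => ∫ s in (0:ℝ)..p.2, g s p.1) := by
  have hpath : ∀ ω, StronglyMeasurable fun s => g s ω := by
    intro ω
    have h1 : StronglyMeasurable fun s : ℝ => g (min s T') ω := by
      have heq : (fun s : ℝ => g (min s T') ω)
          = (fun q : Iic T' × Ω => g (q.1 : ℝ) q.2) ∘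
            (fun s : ℝ => ((⟨min s T', mem_Iic.2 (min_le_right _ _)⟩ : Iic T'), ω)) := rfl
      rw [heq]
      exact (hg T').comp_measurable
        (((measurable_id.min measurable_const).subtype_mk).prodMk measurable_const)
    have heq : (fun s => g s ω) = (Icc (0:ℝ) T').indicator (fun s => g (min s T') ω) := by
      funext s
      by_cases hs : s ∈ Icc (0:ℝ) T'
      · rw [Set.indicator_of_mem hs, min_eq_left hs.2]
      · rw [Set.indicator_of_notMem hs, hsupp s ω hs]
    rw [heq]
    exact h1.indicator measurableSet_Icc
  have hint : ∀ ω, Integrable (fun s => g s ω) volume := fun ω =>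
    integrable_of_bdd_supp' (hpath ω) (fun s => hgb s ω) (fun s hs => hsupp s ω hs)
  have hcont : ∀ ω, Continuous fun t => ∫ s in (0:ℝ)..t, g s ω := fun ω =>
    (hint ω).continuous_primitive 0
  have hadap : StronglyAdapted 𝓕 fun t ω => ∫ s in (0:ℝ)..t, g s ω := by
    intro i
    show StronglyMeasurable[𝓕 i] fun ω => ∫ s in (0:ℝ)..i, g s ω
    rcases le_or_gt 0 i with hi | hi
    · have key : (fun ω => ∫ s in (0:ℝ)..i, g s ω)
          = fun ω => ∫ s in Ioc (0:ℝ) i, g (min s i) ω := by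
        funext ω
        rw [intervalIntegral.integral_of_le hi]
        exact setIntegral_congr_fun measurableSet_Ioc fun s hs => by rw [min_eq_left hs.2]
      rw [key]
      have h1 : StronglyMeasurable[(𝓕 i).prod Real.measurableSpace]
          (fun q : Ω × ℝ => g (min q.2 i) q.1) := by
        have heq : (fun q : Ω × ℝ => g (min q.2 i) q.1)
            = (fun p : Iic i × Ω => g (p.1 : ℝ) p.2) ∘
              (fun q : Ω × ℝ => ((⟨min q.2 i, mem_Iic.2 (min_le_right _ _)⟩ : Iic i), q.1)) := rfl
        rw [heq]
        exact (hg i).comp_measurable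
          (((measurable_snd.min measurable_const).subtype_mk).prodMk measurable_fst)
      exact sm_integral_param (𝓕 i) h1 (volume.restrict (Ioc 0 i))
    · have key : (fun ω => ∫ s in (0:ℝ)..i, g s ω) = fun _ => (0 : U) := by
        funext ω
        rw [intervalIntegral.integral_of_ge hi.le]
        have h0 : (fun s => g s ω) =ᵐ[volume.restrict (Ioc i 0)] 0 := by
          refine (ae_restrict_iff' measurableSet_Ioc).2 ?_
          have hne : ∀ᵐ s : ℝ ∂volume, s ≠ 0 := by
            rw [ae_iff]
            simpa using Real.volume_singleton
          filter_upwards [hne] with s hs hmem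
          refine hsupp s ω fun hIcc => hs ?_
          exact le_antisymm hmem.2 hIcc.1
        rw [integral_congr_ae h0]
        simp
      rw [key]
      exact stronglyMeasurable_const
  refine ⟨hint, hcont, hadap.progMeasurable_of_continuous hcont, ?_⟩
  have huncurry : StronglyMeasurable
      (Function.uncurry fun t ω => ∫ s in (0:ℝ)..t, g s ω) :=
    stronglyMeasurable_uncurry_of_continuous_of_stronglyMeasurable hcont
      (fun t => (hadap t).mono (𝓕.le t))
  have heq2 : (fun p : Ω × ℝ => ∫ s in (0:ℝ)..p.2, g s p.1)
      = (Function.uncurry fun t ω => ∫ s in (0:ℝ)..t, g s ω) ∘ Prod.swap := rfl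
  rw [heq2]
  exact huncurry.comp_measurable measurable_swap

end Aux2

/-- Step 4 of the proof of Proposition 3.2: the linear space of processes of the form
`t ↦ ∫_0^t R α_s ds`, with `α` progressively measurable and uniformly bounded, is dense
in the space of square-integrable progressively measurable `U`-valued processes on `[0,T]`,
where `R : U → U` is an injective bounded linear operator with dense range on a real
separable Hilbert space `U`. -/
theorem stmt1
    {Ω U : Type*} {mΩ : MeasurableSpace Ω}
    [NormedAddCommGroup U] [InnerProductSpace ℝ U]
    [CompleteSpace U] [SecondCountableTopology U]
    (P : Measure Ω) [IsProbabilityMeasure P]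
    (𝓕 : Filtration ℝ mΩ)
    (T : ℝ) (hT : 0 < T)
    (R : U →L[ℝ] U) (hRinj : Function.Injective R) (hRdense : DenseRange (R : U → U))
    (v : ℝ → Ω → U) (hvprog : ProgMeasurable 𝓕 v)
    (hvint : ∫⁻ ω, (∫⁻ t in Set.Icc (0:ℝ) T, ENNReal.ofReal (‖v t ω‖ ^ 2)) ∂P ≠ ∞)
    (ε : ℝ) (hε : 0 < ε) :
    ∃ (α : ℝ → Ω → U) (n : ℕ),
      ProgMeasurable 𝓕 α ∧
      (∀ (t : ℝ) (ω : Ω), ‖α t ω‖ ≤ (n : ℝ)) ∧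
      ∫⁻ ω, (∫⁻ t in Set.Icc (0:ℝ) T,
          ENNReal.ofReal (‖v t ω - ∫ s in (0:ℝ)..t, R (α s ω)‖ ^ 2)) ∂P
        < ENNReal.ofReal ε := by
  borelize U
  classical
  -- choose δ
  obtain ⟨δ, hδpos, hδsmall⟩ : ∃ δ : ℝ, 0 < δ ∧ 3 * (δ * T) ^ 2 * T < ε / 3 := by
    refine ⟨min 1 (ε / (9 * (T + 1) ^ 3)), ?_, ?_⟩
    · have : 0 < ε / (9 * (T + 1) ^ 3) := by positivity
      exact lt_min one_pos this
    · set δ := min 1 (ε / (9 * (T + 1) ^ 3)) with hδ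
      have h1 : δ ≤ 1 := min_le_left _ _
      have h2 : δ ≤ ε / (9 * (T + 1) ^ 3) := min_le_right _ _
      have h0 : 0 < δ := lt_min one_pos (by positivity)
      have hT1 : (0:ℝ) < (T + 1) ^ 3 := by positivity
      have hkey : δ * (9 * (T + 1) ^ 3) ≤ ε := by
        calc δ * (9 * (T + 1) ^ 3) ≤ (ε / (9 * (T + 1) ^ 3)) * (9 * (T + 1) ^ 3) :=
              mul_le_mul_of_nonneg_right h2 (by positivity)
          _ = ε := by field_simp
      nlinarith [sq_nonneg δ, sq_nonneg T, mul_pos h0 hT, sq_nonneg (δ*T)]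
  -- the time-truncated version of v
  set v' : ℝ → Ω → U := fun t ω => v (min t T) ω with hv'def
  have hv'prog : ProgMeasurable 𝓕 v' := prog_min_comp hvprog T
  have hv'eq : ∀ (ω : Ω), ∀ t ∈ Icc (0:ℝ) T, v' t ω = v t ω := by
    intro ω t ht
    simp only [hv'def, min_eq_left ht.2]
  have hVjoint : Measurable fun p : Ω × ℝ => v' p.2 p.1 := by
    have heq : (fun p : Ω × ℝ => v' p.2 p.1)
        = (fun q : Iic T × Ω => v (q.1 : ℝ) q.2) ∘
          (fun p : Ω × ℝ => ((⟨min p.2 T, mem_Iic.2 (min_le_right _ _)⟩ : Iic T), p.1)) := rfl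
    rw [heq]
    exact ((hvprog T).measurable).comp
      ((((measurable_snd.min measurable_const).subtype_mk).prodMk
        (measurable_fst.mono le_rfl (𝓕.le T))))
  have hv'path : ∀ ω, StronglyMeasurable fun t => v' t ω := by
    intro ω
    have heq : (fun t : ℝ => v' t ω)
        = (fun q : Iic T × Ω => v (q.1 : ℝ) q.2) ∘
          (fun t : ℝ => ((⟨min t T, mem_Iic.2 (min_le_right _ _)⟩ : Iic T), ω)) := rfl
    rw [heq]
    exact (hvprog T).comp_measurable
      (((measurable_id.min measurable_const).subtype_mk).prodMk measurable_const)
  have hvint' : ∫⁻ ω, (∫⁻ t in Icc (0:ℝ) T, ENNReal.ofReal (‖v' t ω‖ ^ 2)) ∂P ≠ ∞ := by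
    have : ∀ ω, (∫⁻ t in Icc (0:ℝ) T, ENNReal.ofReal (‖v' t ω‖ ^ 2))
        = ∫⁻ t in Icc (0:ℝ) T, ENNReal.ofReal (‖v t ω‖ ^ 2) := fun ω =>
      lintegral_Icc_congr fun t ht => by rw [hv'eq ω t ht]
    rw [lintegral_congr this]
    exact hvint
  -- outer measurability helper
  have houter : ∀ F : Ω × ℝ → ℝ≥0∞, Measurable F →
      Measurable fun ω => ∫⁻ t in Icc (0:ℝ) T, F (ω, t) := fun F hF =>
    hF.lintegral_prod_right' (ν := volume.restrict (Icc 0 T))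
  set G : Ω → ℝ≥0∞ := fun ω => ∫⁻ t in Icc (0:ℝ) T, ENNReal.ofReal (‖v' t ω‖ ^ 2) with hGdef
  have hGmeas : Measurable G :=
    houter _ (ENNReal.measurable_ofReal.comp ((hVjoint.norm).pow_const 2))
  have hGfin : ∀ᵐ ω ∂P, G ω < ∞ := ae_lt_top hGmeas hvint'
  -- dense sequence with e 0 = 0
  have hU : Nonempty U := ⟨0⟩
  set e : ℕ → U := fun k => Nat.rec (0 : U) (fun m _ => TopologicalSpace.denseSeq U m) k
    with hedef
  have he0 : e 0 = 0 := rfl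
  have hed : DenseRange e := by
    have h1 : DenseRange (TopologicalSpace.denseSeq U) := TopologicalSpace.denseRange_denseSeq U
    refine h1.mono ?_
    rintro x ⟨k, rfl⟩
    exact ⟨k+1, rfl⟩
  have hnear : ∀ x : U, Tendsto (fun N => SimpleFunc.nearestPt e N x) atTop (𝓝 x) := fun x =>
    SimpleFunc.tendsto_nearestPt (hed x)
  have hnb : ∀ (N : ℕ) (x : U), ‖x - SimpleFunc.nearestPt e N x‖ ≤ ‖x‖ := by
    intro N x
    have h := SimpleFunc.edist_nearestPt_le e x (Nat.zero_le N)
    rw [he0, edist_dist, edist_dist] at h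
    have h2 := (ENNReal.ofReal_le_ofReal_iff dist_nonneg).1 h
    calc ‖x - SimpleFunc.nearestPt e N x‖ = dist (SimpleFunc.nearestPt e N x) x := by
          rw [dist_comm, dist_eq_norm]
      _ ≤ dist (0:U) x := h2
      _ = ‖x‖ := by simp
  -- step 1 : choice of N
  have hI1 : Tendsto (fun N => ∫⁻ ω, (∫⁻ t in Icc (0:ℝ) T,
      ENNReal.ofReal (‖v' t ω - SimpleFunc.nearestPt e N (v' t ω)‖ ^ 2)) ∂P) atTop (𝓝 0) := by
    have hmeasN : ∀ N : ℕ, Measurable fun ω => ∫⁻ t in Icc (0:ℝ) T,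
        ENNReal.ofReal (‖v' t ω - SimpleFunc.nearestPt e N (v' t ω)‖ ^ 2) := fun N =>
      houter _ (ENNReal.measurable_ofReal.comp
        (((hVjoint.sub ((SimpleFunc.nearestPt e N).measurable.comp hVjoint)).norm).pow_const 2))
    have hboundN : ∀ N, (fun ω => ∫⁻ t in Icc (0:ℝ) T,
        ENNReal.ofReal (‖v' t ω - SimpleFunc.nearestPt e N (v' t ω)‖ ^ 2)) ≤ᵐ[P] G := by
      intro N
      refine Eventually.of_forall fun ω => ?_
      refine lintegral_mono fun t => ENNReal.ofReal_le_ofReal ?_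
      have h1 := hnb N (v' t ω)
      have h2 : (0:ℝ) ≤ ‖v' t ω - SimpleFunc.nearestPt e N (v' t ω)‖ := norm_nonneg _
      nlinarith [norm_nonneg (v' t ω)]
    have hlimN : ∀ᵐ ω ∂P, Tendsto (fun N => ∫⁻ t in Icc (0:ℝ) T,
        ENNReal.ofReal (‖v' t ω - SimpleFunc.nearestPt e N (v' t ω)‖ ^ 2)) atTop
        (𝓝 0) := by
      filter_upwards [hGfin] with ω hGω
      have hFmeas : ∀ N : ℕ, Measurable fun t =>
          ENNReal.ofReal (‖v' t ω - SimpleFunc.nearestPt e N (v' t ω)‖ ^ 2) := fun N =>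
        ENNReal.measurable_ofReal.comp
          (((((hv'path ω).measurable).sub
            ((SimpleFunc.nearestPt e N).measurable.comp (hv'path ω).measurable)).norm).pow_const 2)
      have hFbound : ∀ N : ℕ, (fun t =>
          ENNReal.ofReal (‖v' t ω - SimpleFunc.nearestPt e N (v' t ω)‖ ^ 2))
          ≤ᵐ[volume.restrict (Icc (0:ℝ) T)] fun t => ENNReal.ofReal (‖v' t ω‖ ^ 2) := by
        intro N
        refine Eventually.of_forall fun t => ENNReal.ofReal_le_ofReal ?_
        have h1 := hnb N (v' t ω)
        have h2 : (0:ℝ) ≤ ‖v' t ω - SimpleFunc.nearestPt e N (v' t ω)‖ := norm_nonneg _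
        nlinarith [norm_nonneg (v' t ω)]
      have hFlim : ∀ᵐ t ∂(volume.restrict (Icc (0:ℝ) T)), Tendsto (fun N =>
          ENNReal.ofReal (‖v' t ω - SimpleFunc.nearestPt e N (v' t ω)‖ ^ 2)) atTop
          (𝓝 ((fun _ => (0:ℝ≥0∞)) t)) := by
        refine Eventually.of_forall fun t => ?_
        have hx := hnear (v' t ω)
        have h1 : Tendsto (fun N => v' t ω - SimpleFunc.nearestPt e N (v' t ω)) atTop
            (𝓝 (v' t ω - v' t ω)) := tendsto_const_nhds.sub hx
        rw [sub_self] at h1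
        have h2 : Tendsto (fun N => ‖v' t ω - SimpleFunc.nearestPt e N (v' t ω)‖ ^ 2) atTop
            (𝓝 0) := by simpa using (h1.norm).pow 2
        simpa [Function.comp_def] using (ENNReal.continuous_ofReal.tendsto 0).comp h2
      have := tendsto_lintegral_of_dominated_convergence
        (μ := volume.restrict (Icc (0:ℝ) T))
        (f := fun _ => (0:ℝ≥0∞)) _ hFmeas hFbound hGω.ne hFlim
      simpa using this
    have := tendsto_lintegral_of_dominated_convergence (μ := P)
      (f := fun _ => (0:ℝ≥0∞)) G hmeasN hboundN hvint' hlimN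
    simpa using this
  obtain ⟨N, hN⟩ : ∃ N : ℕ, (∫⁻ ω, (∫⁻ t in Icc (0:ℝ) T,
      ENNReal.ofReal (‖v' t ω - SimpleFunc.nearestPt e N (v' t ω)‖ ^ 2)) ∂P)
      < ENNReal.ofReal (ε/9) := by
    have hpos : (0:ℝ≥0∞) < ENNReal.ofReal (ε/9) := ENNReal.ofReal_pos.2 (by positivity)
    exact (hI1.eventually_lt_const hpos).exists
  set φ : U → U := ⇑(SimpleFunc.nearestPt e N) with hφdef
  have hφmeas : Measurable φ := (SimpleFunc.nearestPt e N).measurable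
  set C : ℝ := (Finset.range (N+1)).sup' (by simp) fun k => ‖e k‖ with hCdef
  have hφval : ∀ x : U, ∃ k, k ≤ N ∧ φ x = e k := fun x =>
    ⟨SimpleFunc.nearestPtInd e N x, SimpleFunc.nearestPtInd_le e N x, rfl⟩
  have hφb : ∀ x : U, ‖φ x‖ ≤ C := by
    intro x
    obtain ⟨k, hk, hval⟩ := hφval x
    rw [hval]
    exact Finset.le_sup' (f := fun k => ‖e k‖) (Finset.mem_range.2 (Nat.lt_succ_of_le hk))
  have hC0 : (0:ℝ) ≤ C := by
    have h := Finset.le_sup' (f := fun k => ‖e k‖) (s := Finset.range (N+1))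
      (Finset.mem_range.2 (Nat.succ_pos N))
    have h0 : (0:ℝ) = ‖e 0‖ := by rw [he0, norm_zero]
    rw [h0]
    exact h
  -- the truncated discretized process w
  set w : ℝ → Ω → U := fun s ω => (Icc (0:ℝ) T).indicator (fun s' => φ (v' s' ω)) s with hwdef
  have hwprog : ProgMeasurable 𝓕 w := prog_indicator (prog_comp_meas hv'prog hφmeas) T
  have hwsupp : ∀ s ω, s ∉ Icc (0:ℝ) T → w s ω = 0 := fun s ω hs =>
    Set.indicator_of_notMem hs _
  have hweq : ∀ ω, ∀ t ∈ Icc (0:ℝ) T, w t ω = φ (v' t ω) := fun ω t ht =>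
    Set.indicator_of_mem ht _
  have hwb : ∀ s ω, ‖w s ω‖ ≤ C := by
    intro s ω
    by_cases hs : s ∈ Icc (0:ℝ) T
    · rw [hweq ω s hs]; exact hφb _
    · rw [hwsupp s ω hs]; simpa using hC0
  have hwpath : ∀ ω, StronglyMeasurable fun s => w s ω := fun ω =>
    ((hφmeas.comp (hv'path ω).measurable).stronglyMeasurable).indicator measurableSet_Icc
  have hwint : ∀ ω, Integrable (fun s => w s ω) volume := fun ω =>
    integrable_of_bdd_supp (hwpath ω) (fun s => hwb s ω) (fun s hs => hwsupp s ω hs)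
  have hwjoint : Measurable fun p : Ω × ℝ => w p.2 p.1 := by
    have heq : (fun p : Ω × ℝ => w p.2 p.1)
        = Set.indicator {p : Ω × ℝ | p.2 ∈ Icc (0:ℝ) T} (fun p => φ (v' p.2 p.1)) := by
      funext p
      simp only [hwdef, Set.indicator_apply, Set.mem_setOf_eq]
    rw [heq]
    exact (hφmeas.comp hVjoint).indicator (measurable_snd measurableSet_Icc)
  -- primitive of w and mollification
  obtain ⟨hwint2, hWcont, hWprog, hWjoint⟩ := primitive_props hwprog hwb hwsupp
  set d : ℕ → ℝ := fun k => ((k:ℝ)+1)⁻¹ with hddef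
  have hdpos : ∀ k, 0 < d k := fun k => by positivity
  set v2 : ℕ → ℝ → Ω → U := fun k t ω =>
    (d k)⁻¹ • ((∫ s in (0:ℝ)..t, w s ω) - ∫ s in (0:ℝ)..(t - d k), w s ω) with hv2def
  have hv2eq : ∀ k t ω, v2 k t ω = (d k)⁻¹ • ∫ s in (t - d k)..t, w s ω := by
    intro k t ω
    simp only [hv2def]
    congr 1
    exact intervalIntegral.integral_interval_sub_left ((hwint ω).intervalIntegrable)
      ((hwint ω).intervalIntegrable)
  have hv2b : ∀ k t ω, ‖v2 k t ω‖ ≤ C := by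
    intro k t ω
    rw [hv2eq, norm_smul]
    have hb : ‖∫ s in (t - d k)..t, w s ω‖ ≤ C * |t - (t - d k)| :=
      intervalIntegral.norm_integral_le_of_norm_le_const fun x _ => hwb x ω
    have habs : |t - (t - d k)| = d k := by
      rw [show t - (t - d k) = d k from by ring]
      exact abs_of_pos (hdpos k)
    rw [habs] at hb
    calc ‖(d k)⁻¹‖ * ‖∫ s in (t - d k)..t, w s ω‖ ≤ ‖(d k)⁻¹‖ * (C * d k) :=
          mul_le_mul_of_nonneg_left hb (norm_nonneg _)
      _ = C := by
          rw [Real.norm_eq_abs, abs_of_pos (inv_pos.2 (hdpos k))]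
          have := (hdpos k).ne'
          field_simp
  have hv2cont : ∀ k ω, Continuous fun t => v2 k t ω := by
    intro k ω
    simp only [hv2def]
    exact ((hWcont ω).sub ((hWcont ω).comp (continuous_id.sub continuous_const))).const_smul _
  have hv2joint : ∀ k, Measurable fun p : Ω × ℝ => v2 k p.2 p.1 := by
    intro k
    simp only [hv2def]
    exact (hWjoint.measurable.sub
      (hWjoint.measurable.comp (measurable_fst.prodMk
        (measurable_snd.sub measurable_const)))).const_smul _
  have hmoll : ∀ ω, ∀ᵐ t ∂(volume : Measure ℝ),
      Tendsto (fun k => v2 k t ω) atTop (𝓝 (w t ω)) := by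
    intro ω
    have hloc : LocallyIntegrable (fun s => w s ω) volume := (hwint ω).locallyIntegrable
    filter_upwards [IsUnifLocDoublingMeasure.ae_tendsto_average
      (μ := (volume : Measure ℝ)) hloc 1] with t ht
    have hδlim : Tendsto (fun k => d k / 2) atTop (𝓝[>] (0:ℝ)) := by
      apply tendsto_nhdsWithin_of_tendsto_nhds_of_eventually_within
      · have hd0 : Tendsto d atTop (𝓝 0) := by
          have := tendsto_one_div_add_atTop_nhds_zero_nat (𝕜 := ℝ)
          simpa [hddef, one_div] using this
        simpa using hd0.div_const 2
      · exact Eventually.of_forall fun k => mem_Ioi.2 (half_pos (hdpos k))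
    have hmem : ∀ᶠ k in atTop, t ∈ Metric.closedBall (t - d k / 2) (1 * (d k / 2)) := by
      refine Eventually.of_forall fun k => ?_
      rw [Metric.mem_closedBall, Real.dist_eq,
        show t - (t - d k / 2) = d k / 2 from by ring,
        abs_of_pos (half_pos (hdpos k))]
      linarith [hdpos k]
    have haux := ht (fun k => t - d k / 2) (fun k => d k / 2) hδlim hmem
    refine haux.congr fun k => ?_
    rw [hv2eq]
    have hball : Metric.closedBall (t - d k / 2) (d k / 2) = Icc (t - d k) t := by
      rw [Real.closedBall_eq_Icc]
      congr 1 <;> ring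
    rw [setAverage_eq, hball, Real.volume_real_Icc,
      show t - (t - d k) = d k from by ring,
      max_eq_left (hdpos k).le]
    congr 1
    rw [MeasureTheory.integral_Icc_eq_integral_Ioc,
      ← intervalIntegral.integral_of_le (by linarith [hdpos k] : t - d k ≤ t)]
  -- step 2 : choice of K
  have hI2 : Tendsto (fun k => ∫⁻ ω, (∫⁻ t in Icc (0:ℝ) T,
      ENNReal.ofReal (‖w t ω - v2 k t ω‖ ^ 2)) ∂P) atTop (𝓝 0) := by
    have hpt : ∀ k t ω, ENNReal.ofReal (‖w t ω - v2 k t ω‖ ^ 2)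
        ≤ ENNReal.ofReal ((2*C)^2) := by
      intro k t ω
      refine ENNReal.ofReal_le_ofReal ?_
      have h1 := hwb t ω
      have h2 := hv2b k t ω
      have h3 : ‖w t ω - v2 k t ω‖ ≤ 2*C := by
        calc ‖w t ω - v2 k t ω‖ ≤ ‖w t ω‖ + ‖v2 k t ω‖ := norm_sub_le _ _
          _ ≤ 2*C := by linarith
      nlinarith [norm_nonneg (w t ω - v2 k t ω)]
    have hmeask : ∀ k, Measurable fun ω => ∫⁻ t in Icc (0:ℝ) T,
        ENNReal.ofReal (‖w t ω - v2 k t ω‖ ^ 2) := fun k =>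
      houter _ (ENNReal.measurable_ofReal.comp
        (((hwjoint.sub (hv2joint k)).norm).pow_const 2))
    have hboundk : ∀ k, (fun ω => ∫⁻ t in Icc (0:ℝ) T,
        ENNReal.ofReal (‖w t ω - v2 k t ω‖ ^ 2)) ≤ᵐ[P]
        fun _ => ENNReal.ofReal ((2*C)^2) * ENNReal.ofReal T := by
      intro k
      refine Eventually.of_forall fun ω => ?_
      calc ∫⁻ t in Icc (0:ℝ) T, ENNReal.ofReal (‖w t ω - v2 k t ω‖ ^ 2)
          ≤ ∫⁻ _t in Icc (0:ℝ) T, ENNReal.ofReal ((2*C)^2) :=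
            lintegral_mono fun t => hpt k t ω
        _ = ENNReal.ofReal ((2*C)^2) * volume (Icc (0:ℝ) T) := setLIntegral_const _ _
        _ = ENNReal.ofReal ((2*C)^2) * ENNReal.ofReal T := by
            rw [Real.volume_Icc, sub_zero]
    have hfinB : ∫⁻ _ω, ENNReal.ofReal ((2*C)^2) * ENNReal.ofReal T ∂P ≠ ∞ := by
      rw [lintegral_const]
      exact ENNReal.mul_ne_top
        (ENNReal.mul_ne_top ENNReal.ofReal_ne_top ENNReal.ofReal_ne_top) (by simp)
    have hlimk : ∀ᵐ ω ∂P, Tendsto (fun k => ∫⁻ t in Icc (0:ℝ) T,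
        ENNReal.ofReal (‖w t ω - v2 k t ω‖ ^ 2)) atTop (𝓝 0) := by
      refine Eventually.of_forall fun ω => ?_
      have hmeast : ∀ k, Measurable fun t =>
          ENNReal.ofReal (‖w t ω - v2 k t ω‖ ^ 2) := fun k =>
        ENNReal.measurable_ofReal.comp
          ((((hwpath ω).measurable.sub (hv2cont k ω).measurable).norm).pow_const 2)
      have hboundt : ∀ k, (fun t => ENNReal.ofReal (‖w t ω - v2 k t ω‖ ^ 2))
          ≤ᵐ[volume.restrict (Icc (0:ℝ) T)] fun _ => ENNReal.ofReal ((2*C)^2) :=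
        fun k => Eventually.of_forall fun t => hpt k t ω
      have hfint : ∫⁻ _t in Icc (0:ℝ) T, ENNReal.ofReal ((2*C)^2) ≠ ∞ := by
        rw [setLIntegral_const]
        exact ENNReal.mul_ne_top ENNReal.ofReal_ne_top (measure_Icc_lt_top).ne
      have hlimt : ∀ᵐ t ∂(volume.restrict (Icc (0:ℝ) T)),
          Tendsto (fun k => ENNReal.ofReal (‖w t ω - v2 k t ω‖ ^ 2)) atTop (𝓝 0) := by
        filter_upwards [ae_restrict_of_ae (hmoll ω)] with t ht
        have h3 : Tendsto (fun k => w t ω - v2 k t ω) atTop (𝓝 (w t ω - w t ω)) :=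
          tendsto_const_nhds.sub ht
        rw [sub_self] at h3
        have h4 : Tendsto (fun k => ‖w t ω - v2 k t ω‖ ^ 2) atTop (𝓝 0) := by
          simpa using (h3.norm).pow 2
        simpa [Function.comp_def] using (ENNReal.continuous_ofReal.tendsto 0).comp h4
      have := tendsto_lintegral_of_dominated_convergence
        (μ := volume.restrict (Icc (0:ℝ) T)) (f := fun _ => (0:ℝ≥0∞)) _
        hmeast hboundt hfint hlimt
      simpa using this
    have := tendsto_lintegral_of_dominated_convergence (μ := P)
      (f := fun _ => (0:ℝ≥0∞)) _ hmeask hboundk hfinB hlimk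
    simpa using this
  obtain ⟨K, hK⟩ : ∃ K : ℕ, (∫⁻ ω, (∫⁻ t in Icc (0:ℝ) T,
      ENNReal.ofReal (‖w t ω - v2 K t ω‖ ^ 2)) ∂P) < ENNReal.ofReal (ε/9) := by
    have hpos : (0:ℝ≥0∞) < ENNReal.ofReal (ε/9) := ENNReal.ofReal_pos.2 (by positivity)
    exact (hI2.eventually_lt_const hpos).exists
  set h : ℝ := d K with hhdef
  have hh : 0 < h := hdpos K
  set u : ℝ → Ω → U := fun s ω => h⁻¹ • (w s ω - w (s - h) ω) with hudef
  have huprog : ProgMeasurable 𝓕 u := by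
    have h1 : ProgMeasurable 𝓕 fun s ω => w (s - h) ω := prog_shift hwprog hh.le
    intro i
    simp only [hudef]
    exact ((hwprog i).sub (h1 i)).const_smul _
  set E : Finset U := insert 0 ((Finset.range (N+1)).image e) with hEdef
  have hwmem : ∀ s ω, w s ω ∈ E := by
    intro s ω
    by_cases hs : s ∈ Icc (0:ℝ) T
    · rw [hweq ω s hs]
      obtain ⟨k, hk, hval⟩ := hφval (v' s ω)
      rw [hval]
      exact Finset.mem_insert_of_mem
        (Finset.mem_image_of_mem e (Finset.mem_range.2 (Nat.lt_succ_of_le hk)))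
    · rw [hwsupp s ω hs]
      exact Finset.mem_insert_self _ _
  set D : Finset U := Finset.image (fun p : U × U => h⁻¹ • (p.1 - p.2)) (E ×ˢ E) with hDdef
  have humem : ∀ s ω, u s ω ∈ D := by
    intro s ω
    simp only [hudef, hDdef]
    exact Finset.mem_image_of_mem _ (a := (w s ω, w (s-h) ω))
      (Finset.mem_product.2 ⟨hwmem s ω, hwmem (s-h) ω⟩)
  have hENe : E.Nonempty := ⟨0, Finset.mem_insert_self _ _⟩
  have hDne : D.Nonempty := by
    rw [hDdef]
    refine ⟨h⁻¹ • ((0:U) - 0), Finset.mem_image_of_mem _ (a := ((0:U),(0:U))) ?_⟩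
    exact Finset.mem_product.2 ⟨Finset.mem_insert_self _ _, Finset.mem_insert_self _ _⟩
  have happrox : ∀ x : U, ∃ b : U, dist x (R b) < δ := fun x => hRdense.exists_dist_lt x hδpos
  set bsel : U → U := fun x => if x = 0 then 0 else Classical.choose (happrox x) with hbdef
  have hbsel0 : bsel 0 = 0 := by simp [hbdef]
  have hbsel : ∀ x : U, ‖R (bsel x) - x‖ < δ := by
    intro x
    by_cases hx : x = 0
    · subst hx
      simpa [hbsel0] using hδpos
    · have hspec := Classical.choose_spec (happrox x)
      simp only [hbdef, if_neg hx]
      rw [← dist_eq_norm, dist_comm]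
      exact hspec
  set ρ : U → U := fun x => ∑ a ∈ D, ({a} : Set U).indicator (fun _ => bsel a) x with hρdef
  have hρmeas : Measurable ρ := by
    apply Finset.measurable_sum
    intro a _
    exact measurable_const.indicator (measurableSet_singleton a)
  have hρD : ∀ x ∈ D, ρ x = bsel x := by
    intro x hx
    simp only [hρdef]
    rw [Finset.sum_eq_single_of_mem x hx]
    · exact Set.indicator_of_mem rfl _
    · intro a _ ha
      exact Set.indicator_of_notMem (fun hxa => ha (Set.mem_singleton_iff.1 hxa).symm) _
  set α : ℝ → Ω → U := fun s ω => ρ (u s ω) with hαdef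
  have hαprog : ProgMeasurable 𝓕 α := prog_comp_meas huprog hρmeas
  have hαval : ∀ s ω, α s ω = bsel (u s ω) := fun s ω => hρD _ (humem s ω)
  set B : ℝ := D.sup' hDne fun a => ‖bsel a‖ with hBdef
  have hαB : ∀ s ω, ‖α s ω‖ ≤ B := by
    intro s ω
    rw [hαval]
    exact Finset.le_sup' (f := fun a => ‖bsel a‖) (humem s ω)
  set n : ℕ := ⌈B⌉₊ with hndef
  have hαn : ∀ s ω, ‖α s ω‖ ≤ (n:ℝ) := fun s ω => (hαB s ω).trans (Nat.le_ceil B)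
  have hRαu : ∀ s ω, ‖R (α s ω) - u s ω‖ ≤ δ := by
    intro s ω
    rw [hαval]
    exact (hbsel _).le
  have husupp : ∀ s ω, s ∉ Icc (0:ℝ) (T + h) → u s ω = 0 := by
    intro s ω hs
    simp only [hudef]
    rw [mem_Icc, not_and_or] at hs
    have hw1 : w s ω = 0 := by
      rcases hs with hs | hs
      · push_neg at hs
        exact hwsupp s ω fun hIcc => absurd hIcc.1 (not_le.2 hs)
      · push_neg at hs
        exact hwsupp s ω fun hIcc => absurd hIcc.2 (not_le.2 (by linarith))
    have hw2 : w (s - h) ω = 0 := by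
      rcases hs with hs | hs
      · push_neg at hs
        exact hwsupp _ ω fun hIcc => absurd hIcc.1 (not_le.2 (by linarith))
      · push_neg at hs
        exact hwsupp _ ω fun hIcc => absurd hIcc.2 (not_le.2 (by linarith))
    rw [hw1, hw2, sub_zero, smul_zero]
  have hρ0 : ρ 0 = 0 := by
    by_cases h0 : (0:U) ∈ D
    · rw [hρD 0 h0, hbsel0]
    · simp only [hρdef]
      apply Finset.sum_eq_zero
      intro a ha
      refine Set.indicator_of_notMem ?_ _
      intro h0a
      rw [Set.mem_singleton_iff] at h0a
      exact h0 (h0a ▸ ha)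
  have hαsupp : ∀ s ω, s ∉ Icc (0:ℝ) (T+h) → R (α s ω) = 0 := by
    intro s ω hs
    simp only [hαdef]
    rw [husupp s ω hs, hρ0, map_zero]
  have hRαb : ∀ s ω, ‖R (α s ω)‖ ≤ ‖R‖ * B := by
    intro s ω
    calc ‖R (α s ω)‖ ≤ ‖R‖ * ‖α s ω‖ := R.le_opNorm _
      _ ≤ ‖R‖ * B := mul_le_mul_of_nonneg_left (hαB s ω) (norm_nonneg _)
  obtain ⟨hgint, hAcont, hAprog, hAjoint⟩ := primitive_props
    (g := fun s ω => R (α s ω)) (𝓕 := 𝓕) (c := ‖R‖*B) (T' := T + h)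
    (fun i => R.continuous.comp_stronglyMeasurable (hαprog i)) hRαb hαsupp
  have hwshiftint : ∀ ω, Integrable (fun s => w (s - h) ω) volume := by
    intro ω
    have hp : StronglyMeasurable fun s => w (s - h) ω :=
      (hwpath ω).comp_measurable (measurable_id.sub measurable_const)
    exact integrable_of_bdd_supp (a := (0:ℝ)) (b := T + h) hp (fun s => hwb _ ω)
      (fun s hs => hwsupp (s - h) ω fun hIcc => by
        rw [mem_Icc] at hIcc
        exact hs (mem_Icc.2 ⟨by linarith [hIcc.1, hh.le], by linarith [hIcc.2]⟩))
  have hmollid : ∀ t ω, (∫ s in (0:ℝ)..t, u s ω) = v2 K t ω := by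
    intro t ω
    have hii1 : IntervalIntegrable (fun s => w s ω) volume 0 t := (hwint ω).intervalIntegrable
    have hii2 : IntervalIntegrable (fun s => w (s - h) ω) volume 0 t :=
      (hwshiftint ω).intervalIntegrable
    have e1 : (∫ s in (0:ℝ)..t, u s ω)
        = h⁻¹ • ((∫ s in (0:ℝ)..t, w s ω) - ∫ s in (0:ℝ)..t, w (s - h) ω) := by
      simp only [hudef]
      rw [intervalIntegral.integral_smul, intervalIntegral.integral_sub hii1 hii2]
    have e2 : (∫ s in (0:ℝ)..t, w (s - h) ω) = ∫ s in ((0:ℝ)-h)..(t - h), w s ω :=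
      intervalIntegral.integral_comp_sub_right (fun s => w s ω) h
    have e3 : (∫ s in ((0:ℝ)-h)..(t-h), w s ω)
        = (∫ s in ((0:ℝ)-h)..(0:ℝ), w s ω) + ∫ s in (0:ℝ)..(t-h), w s ω :=
      (intervalIntegral.integral_add_adjacent_intervals
        ((hwint ω).intervalIntegrable) ((hwint ω).intervalIntegrable)).symm
    have e4 : (∫ s in ((0:ℝ)-h)..(0:ℝ), w s ω) = 0 := by
      rw [intervalIntegral.integral_of_le (by linarith : (0:ℝ)-h ≤ 0)]
      have h0 : (fun s => w s ω) =ᵐ[volume.restrict (Ioc ((0:ℝ)-h) 0)] 0 := by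
        refine (ae_restrict_iff' measurableSet_Ioc).2 ?_
        have hne : ∀ᵐ s : ℝ ∂volume, s ≠ 0 := by
          rw [ae_iff]
          simpa using Real.volume_singleton
        filter_upwards [hne] with s hs hmem
        exact hwsupp s ω fun hIcc => hs (le_antisymm hmem.2 hIcc.1)
      rw [integral_congr_ae h0]
      simp
    rw [e1, e2, e3, e4, zero_add]
  -- final assembly
  refine ⟨α, n, hαprog, hαn, ?_⟩
  have hceq : ∀ ω, ∀ t ∈ Icc (0:ℝ) T,
      ‖v2 K t ω - ∫ s in (0:ℝ)..t, R (α s ω)‖ ≤ δ * T := by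
    intro ω t ht
    rw [← hmollid t ω]
    have hupath : StronglyMeasurable fun s => u s ω := by
      simp only [hudef]
      exact ((hwpath ω).sub ((hwpath ω).comp_measurable
        (measurable_id.sub measurable_const))).const_smul _
    have hub : ∀ s, ‖u s ω‖ ≤ h⁻¹ * (2*C) := by
      intro s
      simp only [hudef]
      rw [norm_smul, Real.norm_eq_abs, abs_of_pos (inv_pos.2 hh)]
      have hb2 : ‖w s ω - w (s-h) ω‖ ≤ 2*C := by
        calc ‖w s ω - w (s-h) ω‖ ≤ ‖w s ω‖ + ‖w (s-h) ω‖ := norm_sub_le _ _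
          _ ≤ 2*C := by linarith [hwb s ω, hwb (s-h) ω]
      exact mul_le_mul_of_nonneg_left hb2 (inv_pos.2 hh).le
    have hii1 : IntervalIntegrable (fun s => u s ω) volume 0 t :=
      (integrable_of_bdd_supp (a := (0:ℝ)) (b := T + h) hupath hub
        (fun s hs => husupp s ω hs)).intervalIntegrable
    have hii2 : IntervalIntegrable (fun s => R (α s ω)) volume 0 t :=
      (hgint ω).intervalIntegrable
    rw [← intervalIntegral.integral_sub hii1 hii2]
    have hbound : ‖∫ s in (0:ℝ)..t, (u s ω - R (α s ω))‖ ≤ δ * |t - 0| :=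
      intervalIntegral.norm_integral_le_of_norm_le_const fun x _ => by
        rw [norm_sub_rev]
        exact hRαu x ω
    calc ‖∫ s in (0:ℝ)..t, (u s ω - R (α s ω))‖ ≤ δ * |t - 0| := hbound
      _ = δ * t := by rw [sub_zero, abs_of_nonneg ht.1]
      _ ≤ δ * T := mul_le_mul_of_nonneg_left ht.2 hδpos.le
  have hptfinal : ∀ ω, ∀ t ∈ Icc (0:ℝ) T,
      ENNReal.ofReal (‖v' t ω - ∫ s in (0:ℝ)..t, R (α s ω)‖ ^ 2)
      ≤ ENNReal.ofReal (3 * ‖v' t ω - φ (v' t ω)‖^2)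
        + (ENNReal.ofReal (3 * ‖w t ω - v2 K t ω‖^2) + ENNReal.ofReal (3 * (δ*T)^2)) := by
    intro ω t ht
    have htri : ‖v' t ω - ∫ s in (0:ℝ)..t, R (α s ω)‖
        ≤ ‖v' t ω - φ (v' t ω)‖ + ‖w t ω - v2 K t ω‖
          + ‖v2 K t ω - ∫ s in (0:ℝ)..t, R (α s ω)‖ := by
      have hsplit : v' t ω - (∫ s in (0:ℝ)..t, R (α s ω))
          = (v' t ω - φ (v' t ω)) + ((w t ω - v2 K t ω)
            + (v2 K t ω - ∫ s in (0:ℝ)..t, R (α s ω))) := by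
        rw [show φ (v' t ω) = w t ω from (hweq ω t ht).symm]
        abel
      rw [hsplit]
      refine le_trans (norm_add_le _ _) ?_
      have h2 := norm_add_le (w t ω - v2 K t ω)
        (v2 K t ω - ∫ s in (0:ℝ)..t, R (α s ω))
      linarith
    have hc := hceq ω t ht
    have hreal : ‖v' t ω - ∫ s in (0:ℝ)..t, R (α s ω)‖ ^ 2
        ≤ 3 * ‖v' t ω - φ (v' t ω)‖^2 + 3 * ‖w t ω - v2 K t ω‖^2 + 3*(δ*T)^2 := by
      have h0 : (0:ℝ) ≤ ‖v' t ω - ∫ s in (0:ℝ)..t, R (α s ω)‖ := norm_nonneg _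
      have ha0 : (0:ℝ) ≤ ‖v' t ω - φ (v' t ω)‖ := norm_nonneg _
      have hb0 : (0:ℝ) ≤ ‖w t ω - v2 K t ω‖ := norm_nonneg _
      have hc0 : (0:ℝ) ≤ ‖v2 K t ω - ∫ s in (0:ℝ)..t, R (α s ω)‖ := norm_nonneg _
      nlinarith [sq_nonneg (‖v' t ω - φ (v' t ω)‖ - ‖w t ω - v2 K t ω‖),
        sq_nonneg (‖w t ω - v2 K t ω‖ - ‖v2 K t ω - ∫ s in (0:ℝ)..t, R (α s ω)‖),
        sq_nonneg (‖v' t ω - φ (v' t ω)‖ - ‖v2 K t ω - ∫ s in (0:ℝ)..t, R (α s ω)‖)]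
    calc ENNReal.ofReal (‖v' t ω - ∫ s in (0:ℝ)..t, R (α s ω)‖ ^ 2)
        ≤ ENNReal.ofReal (3 * ‖v' t ω - φ (v' t ω)‖^2 + 3 * ‖w t ω - v2 K t ω‖^2
            + 3*(δ*T)^2) := ENNReal.ofReal_le_ofReal hreal
      _ = ENNReal.ofReal (3 * ‖v' t ω - φ (v' t ω)‖^2)
          + (ENNReal.ofReal (3 * ‖w t ω - v2 K t ω‖^2) + ENNReal.ofReal (3 * (δ*T)^2)) := by
          rw [ENNReal.ofReal_add (by positivity) (by positivity),
            ENNReal.ofReal_add (by positivity) (by positivity), add_assoc]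
  have hconv : (∫⁻ ω, (∫⁻ t in Icc (0:ℝ) T,
      ENNReal.ofReal (‖v t ω - ∫ s in (0:ℝ)..t, R (α s ω)‖ ^ 2)) ∂P)
      = ∫⁻ ω, (∫⁻ t in Icc (0:ℝ) T,
        ENNReal.ofReal (‖v' t ω - ∫ s in (0:ℝ)..t, R (α s ω)‖ ^ 2)) ∂P :=
    lintegral_congr fun ω => lintegral_Icc_congr fun t ht => by rw [hv'eq ω t ht]
  rw [hconv]
  have hJ1meas_t : ∀ ω, Measurable fun t =>
      ENNReal.ofReal (3 * ‖v' t ω - φ (v' t ω)‖^2) := fun ω =>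
    ENNReal.measurable_ofReal.comp (((((hv'path ω).measurable.sub
      (hφmeas.comp (hv'path ω).measurable)).norm).pow_const 2).const_mul 3)
  have hinner : ∀ ω, (∫⁻ t in Icc (0:ℝ) T,
      ENNReal.ofReal (‖v' t ω - ∫ s in (0:ℝ)..t, R (α s ω)‖ ^ 2))
      ≤ (∫⁻ t in Icc (0:ℝ) T, ENNReal.ofReal (3 * ‖v' t ω - φ (v' t ω)‖^2))
        + ((∫⁻ t in Icc (0:ℝ) T, ENNReal.ofReal (3 * ‖w t ω - v2 K t ω‖^2))
          + ENNReal.ofReal (3 * (δ*T)^2) * ENNReal.ofReal T) := by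
    intro ω
    have hmono : (∫⁻ t in Icc (0:ℝ) T,
        ENNReal.ofReal (‖v' t ω - ∫ s in (0:ℝ)..t, R (α s ω)‖ ^ 2))
        ≤ ∫⁻ t in Icc (0:ℝ) T, (ENNReal.ofReal (3 * ‖v' t ω - φ (v' t ω)‖^2)
          + (ENNReal.ofReal (3 * ‖w t ω - v2 K t ω‖^2) + ENNReal.ofReal (3 * (δ*T)^2))) :=
      lintegral_mono_ae ((ae_restrict_iff' measurableSet_Icc).2
        (Eventually.of_forall fun t ht => hptfinal ω t ht))
    refine hmono.trans ?_
    rw [lintegral_add_left (hJ1meas_t ω), lintegral_add_right _ measurable_const,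
      setLIntegral_const, Real.volume_Icc, sub_zero]
  have hout1meas : Measurable fun ω =>
      ∫⁻ t in Icc (0:ℝ) T, ENNReal.ofReal (3 * ‖v' t ω - φ (v' t ω)‖^2) :=
    houter _ (ENNReal.measurable_ofReal.comp
      ((((hVjoint.sub (hφmeas.comp hVjoint)).norm).pow_const 2).const_mul 3))
  have hJ1 : (∫⁻ ω, (∫⁻ t in Icc (0:ℝ) T,
      ENNReal.ofReal (3 * ‖v' t ω - φ (v' t ω)‖^2)) ∂P)
      = 3 * ∫⁻ ω, (∫⁻ t in Icc (0:ℝ) T,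
        ENNReal.ofReal (‖v' t ω - φ (v' t ω)‖^2)) ∂P := by
    rw [← lintegral_const_mul' (3:ℝ≥0∞) _ (by simp)]
    refine lintegral_congr fun ω => ?_
    rw [← lintegral_const_mul' (3:ℝ≥0∞) _ (by simp)]
    refine lintegral_congr fun t => ?_
    rw [ENNReal.ofReal_mul (by norm_num : (0:ℝ) ≤ 3)]
    norm_num
  have hJ2 : (∫⁻ ω, (∫⁻ t in Icc (0:ℝ) T,
      ENNReal.ofReal (3 * ‖w t ω - v2 K t ω‖^2)) ∂P)
      = 3 * ∫⁻ ω, (∫⁻ t in Icc (0:ℝ) T,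
        ENNReal.ofReal (‖w t ω - v2 K t ω‖^2)) ∂P := by
    rw [← lintegral_const_mul' (3:ℝ≥0∞) _ (by simp)]
    refine lintegral_congr fun ω => ?_
    rw [← lintegral_const_mul' (3:ℝ≥0∞) _ (by simp)]
    refine lintegral_congr fun t => ?_
    rw [ENNReal.ofReal_mul (by norm_num : (0:ℝ) ≤ 3)]
    norm_num
  have hfin1 : 3 * (∫⁻ ω, (∫⁻ t in Icc (0:ℝ) T,
      ENNReal.ofReal (‖v' t ω - φ (v' t ω)‖^2)) ∂P) < ENNReal.ofReal (ε/3) := by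
    have h3 : (3:ℝ≥0∞) * ENNReal.ofReal (ε/9) = ENNReal.ofReal (ε/3) := by
      rw [show (3:ℝ≥0∞) = ENNReal.ofReal 3 by simp,
        ← ENNReal.ofReal_mul (by norm_num : (0:ℝ) ≤ 3)]
      congr 1
      ring
    rw [← h3]
    exact (ENNReal.mul_lt_mul_iff_right (by simp) (by simp)).2 hN
  have hfin2 : 3 * (∫⁻ ω, (∫⁻ t in Icc (0:ℝ) T,
      ENNReal.ofReal (‖w t ω - v2 K t ω‖^2)) ∂P) < ENNReal.ofReal (ε/3) := by
    have h3 : (3:ℝ≥0∞) * ENNReal.ofReal (ε/9) = ENNReal.ofReal (ε/3) := by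
      rw [show (3:ℝ≥0∞) = ENNReal.ofReal 3 by simp,
        ← ENNReal.ofReal_mul (by norm_num : (0:ℝ) ≤ 3)]
      congr 1
      ring
    rw [← h3]
    exact (ENNReal.mul_lt_mul_iff_right (by simp) (by simp)).2 hK
  have hfin3 : ENNReal.ofReal (3*(δ*T)^2) * ENNReal.ofReal T < ENNReal.ofReal (ε/3) := by
    rw [← ENNReal.ofReal_mul (by positivity)]
    refine (ENNReal.ofReal_lt_ofReal_iff (by positivity)).2 ?_
    calc 3*(δ*T)^2 * T = 3 * (δ * T)^2 * T := by ring
      _ < ε/3 := hδsmall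
  calc (∫⁻ ω, (∫⁻ t in Icc (0:ℝ) T,
      ENNReal.ofReal (‖v' t ω - ∫ s in (0:ℝ)..t, R (α s ω)‖ ^ 2)) ∂P)
      ≤ ∫⁻ ω, ((∫⁻ t in Icc (0:ℝ) T, ENNReal.ofReal (3 * ‖v' t ω - φ (v' t ω)‖^2))
        + ((∫⁻ t in Icc (0:ℝ) T, ENNReal.ofReal (3 * ‖w t ω - v2 K t ω‖^2))
          + ENNReal.ofReal (3 * (δ*T)^2) * ENNReal.ofReal T)) ∂P :=
        lintegral_mono hinner
    _ = (∫⁻ ω, (∫⁻ t in Icc (0:ℝ) T,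
          ENNReal.ofReal (3 * ‖v' t ω - φ (v' t ω)‖^2)) ∂P)
        + ((∫⁻ ω, (∫⁻ t in Icc (0:ℝ) T,
          ENNReal.ofReal (3 * ‖w t ω - v2 K t ω‖^2)) ∂P)
          + ENNReal.ofReal (3 * (δ*T)^2) * ENNReal.ofReal T) := by
        rw [lintegral_add_left hout1meas, lintegral_add_right _ measurable_const,
          lintegral_const, measure_univ, mul_one]
    _ < ENNReal.ofReal (ε/3) + (ENNReal.ofReal (ε/3) + ENNReal.ofReal (ε/3)) := by
        rw [hJ1, hJ2]
        exact ENNReal.add_lt_add hfin1 (ENNReal.add_lt_add hfin2 hfin3)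
    _ = ENNReal.ofReal ε := by
        rw [← ENNReal.ofReal_add (by positivity) (by positivity),
          ← ENNReal.ofReal_add (by positivity) (by positivity)]
        congr 1
        ring
end

section
/- Let (Ω, F, P) be a probability space with a filtration (F_t)_{t∈[0,T]}, U a real separable Hilbert space, R : U → U a bounded linear operator, t₀ ∈ [0,T), and ζ : Ω → U a bounded F_{t₀}-measurable random variable; set η := R ∘ ζ. For n ≥ 1 define α^n_s := n·1_{(t₀, t₀+1/n]}(s)·ζ. Then each α^n is a progressively measurable, uniformly bounded U-valued process, ∫_0^t R α^n_s ds = min(n·(t−t₀)⁺, 1)·η for every t ∈ [0,T], and E∫_0^T ‖η·1_{[t₀,T)}(t) − ∫_0^t R α^n_s ds‖² dt ≤ (1/n)·E‖η‖²; in particular the left-hand side tends to 0 as n → ∞. -/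
open MeasureTheory Filter Set
open scoped ENNReal NNReal Topology

/-- Scalar computation for the integral of the indicator. -/
lemma stmt2_scalar (t₀ : ℝ) (n : ℕ) (hn : 1 ≤ n) (t : ℝ) :
    max (min t (t₀ + 1 / (n : ℝ)) - t₀) 0 * (n : ℝ)
      = min ((n : ℝ) * max (t - t₀) 0) 1 := by
  have hn0 : (0:ℝ) < n := by exact_mod_cast Nat.lt_of_lt_of_le Nat.zero_lt_one hn
  have h1n : (0:ℝ) < 1 / n := by positivity
  rcases le_total t t₀ with h | h
  · have h1 : min t (t₀ + 1 / (n:ℝ)) = t := min_eq_left (by linarith)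
    have h2 : max (t - t₀) (0:ℝ) = 0 := max_eq_right (by linarith)
    rw [h1, h2]
    simp
  · have h2 : max (t - t₀) (0:ℝ) = t - t₀ := max_eq_left (by linarith)
    rcases le_total t (t₀ + 1 / n) with hc | hc
    · have h1 : min t (t₀ + 1 / (n:ℝ)) = t := min_eq_left hc
      have h4 : (n:ℝ) * (t - t₀) ≤ 1 := by
        calc (n:ℝ) * (t - t₀) ≤ (n:ℝ) * (1/n) :=
              mul_le_mul_of_nonneg_left (by linarith) hn0.le
          _ = 1 := by field_simp
      rw [h1, h2, min_eq_left h4]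
      ring
    · have h1 : min t (t₀ + 1 / (n:ℝ)) = t₀ + 1 / n := min_eq_right hc
      have h4 : (1:ℝ) ≤ (n:ℝ) * (t - t₀) := by
        calc (1:ℝ) = (n:ℝ) * (1/n) := by field_simp
          _ ≤ (n:ℝ) * (t - t₀) := mul_le_mul_of_nonneg_left (by linarith) hn0.le
      have h5 : t₀ + 1 / (n:ℝ) - t₀ = 1 / n := by ring
      rw [h1, h2, h5, min_eq_right h4, max_eq_left h1n.le]
      field_simp

/-- The explicit construction in Step 4 of the proof of Proposition 3.2. -/
theorem stmt2
    {Ω U : Type*} {mΩ : MeasurableSpace Ω}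
    [NormedAddCommGroup U] [InnerProductSpace ℝ U]
    [CompleteSpace U] [SecondCountableTopology U]
    (P : Measure Ω) [IsProbabilityMeasure P]
    (𝓕 : Filtration ℝ mΩ)
    (T t₀ : ℝ) (ht₀ : t₀ ∈ Set.Ico (0:ℝ) T)
    (R : U →L[ℝ] U)
    (ζ : Ω → U) (hζmeas : StronglyMeasurable[𝓕 t₀] ζ)
    (Cζ : ℝ) (hζbdd : ∀ ω, ‖ζ ω‖ ≤ Cζ)
    (η : Ω → U) (hη : η = fun ω => R (ζ ω))
    (n : ℕ) (hn : 1 ≤ n)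
    (α : ℝ → Ω → U)
    (hα : α = fun s ω =>
      Set.indicator (Set.Ioc t₀ (t₀ + 1 / (n : ℝ))) (fun _ => (n : ℝ) • ζ ω) s) :
    ProgMeasurable 𝓕 α ∧
    (∃ C : ℝ, ∀ (s : ℝ) (ω : Ω), ‖α s ω‖ ≤ C) ∧
    (∀ t ∈ Set.Icc (0:ℝ) T, ∀ ω : Ω,
      (∫ s in (0:ℝ)..t, R (α s ω)) = min ((n : ℝ) * max (t - t₀) 0) 1 • η ω) ∧
    (∫ ω, (∫ t in Set.Icc (0:ℝ) T,
        ‖Set.indicator (Set.Ico t₀ T) (fun _ => η ω) t - ∫ s in (0:ℝ)..t, R (α s ω)‖ ^ 2) ∂P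
      ≤ (1 / (n : ℝ)) * ∫ ω, ‖η ω‖ ^ 2 ∂P) := by
  have hn0 : (0:ℝ) < n := by exact_mod_cast Nat.lt_of_lt_of_le Nat.zero_lt_one hn
  have h1n : (0:ℝ) < 1 / n := by positivity
  set S : Set ℝ := Set.Ioc t₀ (t₀ + 1 / (n : ℝ)) with hS
  -- Part 1: progressive measurability
  have hprog : ProgMeasurable 𝓕 α := by
    intro i
    rcases le_or_gt i t₀ with hi | hi
    · have hzero : (fun p : Set.Iic i × Ω => α (p.1 : ℝ) p.2) = fun _ => (0:U) := by
        funext p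
        have hnm : (p.1 : ℝ) ∉ S := by
          intro hmem
          exact absurd hmem.1 (not_lt.2 (le_trans p.1.2 hi))
        simp [hα, Set.indicator_of_notMem hnm]
      rw [hzero]
      exact stronglyMeasurable_const
    · have hζi : StronglyMeasurable[𝓕 i] ζ := hζmeas.mono (𝓕.mono hi.le)
      have h1 : Measurable[Subtype.instMeasurableSpace.prod (𝓕 i)]
          (fun p : Set.Iic i × Ω => S.indicator (fun _ => (1:ℝ)) (p.1 : ℝ)) :=
        (measurable_const.indicator measurableSet_Ioc).comp
          (measurable_subtype_coe.comp measurable_fst)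
      have h2 : StronglyMeasurable[Subtype.instMeasurableSpace.prod (𝓕 i)]
          (fun p : Set.Iic i × Ω => (n:ℝ) • ζ p.2) :=
        (hζi.comp_measurable measurable_snd).const_smul _
      have h3 := h1.stronglyMeasurable.smul h2
      have hfun : (fun p : Set.Iic i × Ω => α (p.1 : ℝ) p.2)
          = fun p : Set.Iic i × Ω =>
              (S.indicator (fun _ => (1:ℝ)) (p.1 : ℝ)) • ((n:ℝ) • ζ p.2) := by
        funext p
        by_cases hmem : (p.1:ℝ) ∈ S <;> simp [hα, hmem]
      rw [hfun]
      exact h3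
  -- Part 2: uniform bound
  have hbdd : ∃ C : ℝ, ∀ (s : ℝ) (ω : Ω), ‖α s ω‖ ≤ C := by
    refine ⟨(n:ℝ) * max Cζ 0, fun s ω => ?_⟩
    simp only [hα]
    by_cases hs : s ∈ S
    · rw [Set.indicator_of_mem hs, norm_smul, Real.norm_of_nonneg hn0.le]
      exact mul_le_mul_of_nonneg_left (le_trans (hζbdd ω) (le_max_left _ _)) hn0.le
    · rw [Set.indicator_of_notMem hs, norm_zero]
      positivity
  -- Part 3: explicit integral
  have key : ∀ t ∈ Set.Icc (0:ℝ) T, ∀ ω : Ω,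
      (∫ s in (0:ℝ)..t, R (α s ω)) = min ((n : ℝ) * max (t - t₀) 0) 1 • η ω := by
    intro t ht ω
    have hfun : (fun s => R (α s ω)) = fun s => S.indicator (fun _ => (n:ℝ) • η ω) s := by
      funext s
      by_cases hs : s ∈ S
      · simp [hα, hη, Set.indicator_of_mem hs, _root_.map_smul]
      · simp [hα, Set.indicator_of_notMem hs]
    rw [hfun, intervalIntegral.integral_of_le ht.1,
      MeasureTheory.setIntegral_indicator measurableSet_Ioc,
      MeasureTheory.setIntegral_const, Set.Ioc_inter_Ioc,
      max_eq_right ht₀.1, Real.volume_real_Ioc, smul_smul,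
      stmt2_scalar t₀ n hn t]
  refine ⟨hprog, hbdd, key, ?_⟩
  -- Part 4: the L² estimate
  set c : ℝ → ℝ := fun t => min ((n : ℝ) * max (t - t₀) 0) 1 with hc
  set φ : ℝ → ℝ := fun t =>
    (Set.indicator (Set.Ico t₀ T) (fun _ => (1:ℝ)) t - c t) ^ 2 with hφ
  have hc01 : ∀ t, 0 ≤ c t ∧ c t ≤ 1 := by
    intro t
    constructor
    · apply le_min _ zero_le_one
      positivity
    · exact min_le_right _ _
  have hφm : Measurable φ := by
    apply Measurable.pow_const
    exact (measurable_const.indicator measurableSet_Ico).sub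
      ((measurable_const.mul ((measurable_id.sub measurable_const).max measurable_const)).min
        measurable_const)
  have hφbd : ∀ t, |φ t| ≤ 1 := by
    intro t
    have h1 := hc01 t
    by_cases ht : t ∈ Set.Ico t₀ T
    · rw [hφ]
      simp only [Set.indicator_of_mem ht]
      rw [abs_of_nonneg (sq_nonneg _)]
      nlinarith [h1.1, h1.2]
    · rw [hφ]
      simp only [Set.indicator_of_notMem ht]
      rw [abs_of_nonneg (sq_nonneg _)]
      nlinarith [h1.1, h1.2]
  -- integral of φ over [0, T] is at most 1/n
  have hφ_int : IntegrableOn φ (Set.Icc (0:ℝ) T) := by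
    refine Integrable.mono' (integrable_const 1) hφm.aestronglyMeasurable ?_
    · exact Filter.Eventually.of_forall fun t => by
        simpa [Real.norm_eq_abs] using hφbd t
  have hind_int : Integrable (Set.indicator (Set.Icc t₀ (t₀ + 1 / (n:ℝ))) (fun _ => (1:ℝ))) := by
    rw [integrable_indicator_iff measurableSet_Icc]
    exact integrableOn_const (by rw [Real.volume_Icc]; exact ENNReal.ofReal_ne_top)
  have hφle : ∀ t, 0 ≤ t → t < T →
      φ t ≤ Set.indicator (Set.Icc t₀ (t₀ + 1 / (n:ℝ))) (fun _ => (1:ℝ)) t := by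
    intro t ht0 htT
    rcases lt_or_ge t t₀ with h | h
    · have h1 : t ∉ Set.Ico t₀ T := fun hmem => absurd hmem.1 (not_le.2 h)
      have h2 : c t = 0 := by
        rw [hc]
        simp only
        rw [max_eq_right (by linarith), mul_zero, min_eq_left zero_le_one]
      rw [hφ]
      simp only [Set.indicator_of_notMem h1, h2]
      norm_num
      exact Set.indicator_nonneg (fun _ _ => zero_le_one) t
    · have h1 : t ∈ Set.Ico t₀ T := ⟨h, htT⟩
      rcases lt_or_ge t (t₀ + 1 / n) with h2 | h2
      · have hmem : t ∈ Set.Icc t₀ (t₀ + 1 / (n:ℝ)) := ⟨h, h2.le⟩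
        have hcb := hc01 t
        rw [Set.indicator_of_mem hmem, hφ]
        simp only [Set.indicator_of_mem h1]
        nlinarith [hcb.1, hcb.2]
      · have hc1 : c t = 1 := by
          rw [hc]
          simp only
          rw [max_eq_left (by linarith)]
          apply min_eq_right
          calc (1:ℝ) = (n:ℝ) * (1/n) := by field_simp
            _ ≤ (n:ℝ) * (t - t₀) := mul_le_mul_of_nonneg_left (by linarith) hn0.le
        rw [hφ]
        simp only [Set.indicator_of_mem h1, hc1]
        norm_num
        exact Set.indicator_nonneg (fun _ _ => zero_le_one) t
  have hφ_int_le : (∫ t in Set.Icc (0:ℝ) T, φ t) ≤ 1 / n := by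
    have hae : φ ≤ᵐ[volume.restrict (Set.Icc (0:ℝ) T)]
        Set.indicator (Set.Icc t₀ (t₀ + 1 / (n:ℝ))) (fun _ => (1:ℝ)) := by
      have hTnull : ∀ᵐ t ∂(volume.restrict (Set.Icc (0:ℝ) T)), t ≠ T := by
        rw [ae_iff]
        have : {t : ℝ | ¬ t ≠ T} = {T} := by ext t; simp
        rw [this]
        exact le_antisymm (le_trans (Measure.restrict_le_self _) (by simp)) zero_le
      filter_upwards [ae_restrict_mem measurableSet_Icc, hTnull] with t ht htT
      exact hφle t ht.1 (lt_of_le_of_ne ht.2 htT)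
    calc (∫ t in Set.Icc (0:ℝ) T, φ t)
        ≤ ∫ t in Set.Icc (0:ℝ) T, Set.indicator (Set.Icc t₀ (t₀ + 1 / (n:ℝ))) (fun _ => (1:ℝ)) t :=
          integral_mono_ae hφ_int hind_int.integrableOn hae
      _ ≤ ∫ t, Set.indicator (Set.Icc t₀ (t₀ + 1 / (n:ℝ))) (fun _ => (1:ℝ)) t :=
          setIntegral_le_integral hind_int
            (Filter.Eventually.of_forall (Set.indicator_nonneg (fun _ _ => zero_le_one)))
      _ = 1 / n := by
          rw [MeasureTheory.integral_indicator_const _ measurableSet_Icc, Real.volume_real_Icc]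
          rw [add_sub_cancel_left, max_eq_left h1n.le, smul_eq_mul, mul_one]
  -- pointwise (in ω) bound of the inner integral
  have hinner : ∀ ω : Ω,
      (∫ t in Set.Icc (0:ℝ) T,
        ‖Set.indicator (Set.Ico t₀ T) (fun _ => η ω) t - ∫ s in (0:ℝ)..t, R (α s ω)‖ ^ 2)
      ≤ (1 / (n:ℝ)) * ‖η ω‖ ^ 2 := by
    intro ω
    have heq : Set.EqOn
        (fun t => ‖Set.indicator (Set.Ico t₀ T) (fun _ => η ω) t
            - ∫ s in (0:ℝ)..t, R (α s ω)‖ ^ 2)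
        (fun t => φ t * ‖η ω‖ ^ 2) (Set.Icc (0:ℝ) T) := by
      intro t ht
      have h1 : Set.indicator (Set.Ico t₀ T) (fun _ => η ω) t
          = (Set.indicator (Set.Ico t₀ T) (fun _ => (1:ℝ)) t) • η ω := by
        by_cases hm : t ∈ Set.Ico t₀ T <;> simp [hm]
      simp only
      rw [key t ht ω, h1, ← sub_smul, norm_smul, mul_pow, Real.norm_eq_abs, sq_abs]
    rw [setIntegral_congr_fun measurableSet_Icc heq, integral_mul_const]
    exact mul_le_mul_of_nonneg_right hφ_int_le (sq_nonneg _)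
  -- conclude by integrating in ω
  have hηm : StronglyMeasurable η := by
    rw [hη]
    exact R.continuous.comp_stronglyMeasurable (hζmeas.mono (𝓕.le t₀))
  have hηbd : ∀ ω, ‖η ω‖ ≤ ‖R‖ * max Cζ 0 := by
    intro ω
    rw [hη]
    calc ‖R (ζ ω)‖ ≤ ‖R‖ * ‖ζ ω‖ := R.le_opNorm _
      _ ≤ ‖R‖ * max Cζ 0 :=
        mul_le_mul_of_nonneg_left (le_trans (hζbdd ω) (le_max_left _ _)) (norm_nonneg _)
  have hη2_int : Integrable (fun ω => ‖η ω‖ ^ 2) P := by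
    refine Integrable.mono' (integrable_const ((‖R‖ * max Cζ 0) ^ 2))
      ((hηm.norm.measurable.pow_const 2).aestronglyMeasurable) ?_
    refine Filter.Eventually.of_forall fun ω => ?_
    rw [Real.norm_eq_abs, abs_of_nonneg (sq_nonneg _)]
    have := hηbd ω
    nlinarith [norm_nonneg (η ω), this]
  calc (∫ ω, (∫ t in Set.Icc (0:ℝ) T,
        ‖Set.indicator (Set.Ico t₀ T) (fun _ => η ω) t - ∫ s in (0:ℝ)..t, R (α s ω)‖ ^ 2) ∂P)
      ≤ ∫ ω, (1 / (n:ℝ)) * ‖η ω‖ ^ 2 ∂P := by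
        apply integral_mono_of_nonneg
        · exact Filter.Eventually.of_forall fun ω =>
            integral_nonneg fun t => sq_nonneg _
        · exact hη2_int.const_mul _
        · exact Filter.Eventually.of_forall hinner
    _ = (1 / (n:ℝ)) * ∫ ω, ‖η ω‖ ^ 2 ∂P := integral_const_mul _ _
end

section
/- Let H and U be real separable Hilbert spaces, T > 0, (Ω, F, P) a probability space, and let S : [0,T] → L(H,H) be a family of bounded linear operators with ‖S(t)‖_{L(H,H)} ≤ 1 for all t ∈ [0,T] and such that t ↦ S(t)y is continuous for every y ∈ H. Let F : H × U → H be continuous with ‖F(y,a)‖ ≤ C_F·(1 + ‖y‖) and ‖F(y,a) − F(y′,a)‖ ≤ L_F·‖y − y′‖ for all y, y′ ∈ H and a ∈ U. Let u^n, u : Ω × [0,T] → U be measurable processes such that u^n → u in P ⊗ dt-measure, and let X^n, X : Ω × [0,T] → H be processes with continuous paths such that E[sup_{t∈[0,T]} ‖X_t‖²] < ∞ and, P-almost surely, X^n_t − X_t = ∫_0^t S(t−s)·(F(X^n_s, u^n_s) − F(X_s, u_s)) ds for all t ∈ [0,T]. Then E[sup_{t∈[0,T]} ‖X^n_t − X_t‖²]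 → 0 as n → ∞. -/
open MeasureTheory Filter Set
open scoped ENNReal NNReal Topology

lemma gronwall_aux {φ : ℝ → ℝ} {T a L : ℝ} (ha : 0 ≤ a) (hL : 0 < L)
    (hφ : Continuous φ) (hpos : ∀ t ∈ Icc (0:ℝ) T, 0 ≤ φ t)
    (hineq : ∀ t ∈ Icc (0:ℝ) T, φ t ≤ a + L * ∫ s in (0:ℝ)..t, φ s) :
    ∀ t ∈ Icc (0:ℝ) T, φ t ≤ a * Real.exp (L * T) := by
  set G : ℝ → ℝ := fun t => ∫ s in (0:ℝ)..t, φ s with hG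
  have hGd : ∀ b : ℝ, HasDerivAt G (φ b) b := fun b =>
    (hφ.integral_hasStrictDerivAt 0 b).hasDerivAt
  have hGnn : ∀ x ∈ Icc (0:ℝ) T, 0 ≤ G x := by
    intro x hx
    exact intervalIntegral.integral_nonneg hx.1
      (fun s hs => hpos s ⟨hs.1, hs.2.trans hx.2⟩)
  have main : ∀ x ∈ Icc (0:ℝ) T, ‖G x‖ ≤ gronwallBound 0 L a (x - 0) := by
    refine norm_le_gronwallBound_of_norm_deriv_right_le
      (f := G) (f' := φ) ?_ ?_ ?_ ?_
    · exact fun x _ => (hGd x).continuousAt.continuousWithinAt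
    · exact fun x _ => (hGd x).hasDerivWithinAt
    · simp [hG]
    · intro x hx
      have hx' : x ∈ Icc (0:ℝ) T := ⟨hx.1, hx.2.le⟩
      rw [Real.norm_of_nonneg (hpos x hx'), Real.norm_of_nonneg (hGnn x hx')]
      linarith [hineq x hx']
  intro t ht
  have h1 := hineq t ht
  have h2 := main t ht
  rw [Real.norm_of_nonneg (hGnn t ht)] at h2
  have hb : gronwallBound 0 L a (t - 0) = a / L * (Real.exp (L * t) - 1) := by
    rw [gronwallBound_of_K_ne_0 hL.ne']; simp
  rw [hb] at h2
  have h3 : φ t ≤ a * Real.exp (L * t) := by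
    have := mul_le_mul_of_nonneg_left h2 hL.le
    calc φ t ≤ a + L * G t := h1
      _ ≤ a + L * (a / L * (Real.exp (L * t) - 1)) := by linarith
      _ = a * Real.exp (L * t) := by field_simp; ring
  refine h3.trans ?_
  have : Real.exp (L * t) ≤ Real.exp (L * T) :=
    Real.exp_le_exp.mpr (mul_le_mul_of_nonneg_left ht.2 hL.le)
  nlinarith [Real.exp_pos (L * t)]

/-- Convergence (3.1) in Step 1 of the proof of Proposition 3.2: if the controls `u^n`
converge to `u` in `P ⊗ dt`-measure on `Ω × [0,T]`, `F` is continuous with linear growth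
and Lipschitz in the state variable uniformly in the control, and the processes `X^n, X`
have continuous paths with `E[sup_{t ∈ [0,T]} ‖X_t‖²] < ∞` and satisfy, `P`-a.s.,
`X^n_t - X_t = ∫_0^t S(t-s) (F(X^n_s, u^n_s) - F(X_s, u_s)) ds` on `[0,T]`, then
`E[sup_{t ∈ [0,T]} ‖X^n_t - X_t‖²] → 0`. -/
theorem stmt5
    {Ω H U : Type*} {mΩ : MeasurableSpace Ω}
    [NormedAddCommGroup H] [InnerProductSpace ℝ H] [CompleteSpace H] [SecondCountableTopology H]
    [NormedAddCommGroup U] [InnerProductSpace ℝ U] [CompleteSpace U] [SecondCountableTopology U]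
    (P : Measure Ω) [IsProbabilityMeasure P]
    (T : ℝ) (hT : 0 < T)
    (S : ℝ → H →L[ℝ] H)
    (hSbdd : ∀ t ∈ Set.Icc (0:ℝ) T, ‖S t‖ ≤ 1)
    (hScont : ∀ y : H, ContinuousOn (fun t => S t y) (Set.Icc (0:ℝ) T))
    (F : H → U → H) (hFcont : Continuous (Function.uncurry F))
    (CF LF : ℝ) (hCF : 0 < CF) (hLF : 0 < LF)
    (hFgrowth : ∀ (y : H) (a : U), ‖F y a‖ ≤ CF * (1 + ‖y‖))
    (hFlip : ∀ (y y' : H) (a : U), ‖F y a - F y' a‖ ≤ LF * ‖y - y'‖)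
    (un : ℕ → ℝ → Ω → U) (u : ℝ → Ω → U)
    (hunmeas : ∀ n, StronglyMeasurable (Function.uncurry (un n)))
    (humeas : StronglyMeasurable (Function.uncurry u))
    (huconv : TendstoInMeasure (P.prod (volume.restrict (Set.Icc (0:ℝ) T)))
      (fun n p => un n p.2 p.1) atTop (fun p => u p.2 p.1))
    (Xn : ℕ → ℝ → Ω → H) (X : ℝ → Ω → H)
    (hXnmeas : ∀ n, StronglyMeasurable (Function.uncurry (Xn n)))
    (hXmeas : StronglyMeasurable (Function.uncurry X))
    (hXncont : ∀ n ω, ContinuousOn (fun t => Xn n t ω) (Set.Icc (0:ℝ) T))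
    (hXcont : ∀ ω, ContinuousOn (fun t => X t ω) (Set.Icc (0:ℝ) T))
    (hXint : ∫⁻ ω, (⨆ t ∈ Set.Icc (0:ℝ) T, ENNReal.ofReal (‖X t ω‖ ^ 2)) ∂P ≠ ∞)
    (heq : ∀ n, ∀ᵐ ω ∂P, ∀ t ∈ Set.Icc (0:ℝ) T,
      Xn n t ω - X t ω
        = ∫ s in (0:ℝ)..t, S (t - s) (F (Xn n s ω) (un n s ω) - F (X s ω) (u s ω))) :
    Tendsto
      (fun n => ∫⁻ ω, (⨆ t ∈ Set.Icc (0:ℝ) T, ENNReal.ofReal (‖Xn n t ω - X t ω‖ ^ 2)) ∂P)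
      atTop (𝓝 0) := by
  -- Notation
  set μt : Measure ℝ := volume.restrict (Set.Icc (0:ℝ) T) with hμt
  set ψ : ℕ → Ω → ℝ → ℝ :=
    fun n ω s => ‖F (X s ω) (un n s ω) - F (X s ω) (u s ω)‖ with hψ
  set g : ℕ → Ω → ℝ := fun n ω => ∫ s, ψ n ω s ∂μt with hg
  set C : ℝ≥0∞ := ENNReal.ofReal (Real.exp (LF * T) ^ 2) with hC
  set Gq : ℕ → ℝ≥0∞ := fun n => ∫⁻ ω, ENNReal.ofReal (g n ω ^ 2) ∂P with hGq
  -- sectional measurability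
  have hsectX : ∀ ω, StronglyMeasurable fun s => X s ω := fun ω =>
    hXmeas.comp_measurable (measurable_id.prodMk measurable_const)
  have hsectXn : ∀ n ω, StronglyMeasurable fun s => Xn n s ω := fun n ω =>
    (hXnmeas n).comp_measurable (measurable_id.prodMk measurable_const)
  have hsectun : ∀ n ω, StronglyMeasurable fun s => un n s ω := fun n ω =>
    (hunmeas n).comp_measurable (measurable_id.prodMk measurable_const)
  have hsectu : ∀ ω, StronglyMeasurable fun s => u s ω := fun ω =>
    humeas.comp_measurable (measurable_id.prodMk measurable_const)
  have hψm : ∀ n ω, StronglyMeasurable (ψ n ω) := by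
    intro n ω
    exact ((hFcont.comp_stronglyMeasurable ((hsectX ω).prodMk (hsectun n ω))).sub
      (hFcont.comp_stronglyMeasurable ((hsectX ω).prodMk (hsectu ω)))).norm
  have hψnn : ∀ n ω s, 0 ≤ ψ n ω s := fun n ω s => norm_nonneg _
  have hψle : ∀ n ω s, ψ n ω s ≤ 2 * CF * (1 + ‖X s ω‖) := by
    intro n ω s
    calc ψ n ω s ≤ ‖F (X s ω) (un n s ω)‖ + ‖F (X s ω) (u s ω)‖ := norm_sub_le _ _
      _ ≤ CF * (1 + ‖X s ω‖) + CF * (1 + ‖X s ω‖) :=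
          add_le_add (hFgrowth _ _) (hFgrowth _ _)
      _ = 2 * CF * (1 + ‖X s ω‖) := by ring
  have hDnn : ∀ (ω : Ω) (s : ℝ), 0 ≤ 2 * CF * (1 + ‖X s ω‖) := by
    intro ω s
    have := norm_nonneg (X s ω)
    positivity
  have hDint : ∀ ω, IntegrableOn (fun s => 2 * CF * (1 + ‖X s ω‖)) (Set.Icc (0:ℝ) T) :=
    fun ω => (continuousOn_const.mul (continuousOn_const.add
      (hXcont ω).norm)).integrableOn_Icc
  have hψint : ∀ n ω, IntegrableOn (ψ n ω) (Set.Icc (0:ℝ) T) := by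
    intro n ω
    refine MeasureTheory.Integrable.mono (hDint ω) (hψm n ω).aestronglyMeasurable ?_
    refine Eventually.of_forall fun s => ?_
    rw [Real.norm_of_nonneg (hψnn n ω s), Real.norm_of_nonneg (hDnn ω s)]
    exact hψle n ω s
  have hgnn : ∀ n ω, 0 ≤ g n ω := fun n ω =>
    integral_nonneg (fun s => hψnn n ω s)
  -- measurability of g
  have hgm : ∀ n, StronglyMeasurable (g n) := by
    intro n
    have hjoint : StronglyMeasurable (Function.uncurry (fun ω s => ψ n ω s)) := by
      have hX' : StronglyMeasurable (fun q : Ω × ℝ => X q.2 q.1) :=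
        hXmeas.comp_measurable measurable_swap
      have hun' : StronglyMeasurable (fun q : Ω × ℝ => un n q.2 q.1) :=
        (hunmeas n).comp_measurable measurable_swap
      have hu' : StronglyMeasurable (fun q : Ω × ℝ => u q.2 q.1) :=
        humeas.comp_measurable measurable_swap
      exact ((hFcont.comp_stronglyMeasurable (hX'.prodMk hun')).sub
        (hFcont.comp_stronglyMeasurable (hX'.prodMk hu'))).norm
    exact hjoint.integral_prod_right
  -- Pathwise Gronwall estimate: L n ≤ C * Gq n
  have hLleG : ∀ n,
      (∫⁻ ω, (⨆ t ∈ Set.Icc (0:ℝ) T, ENNReal.ofReal (‖Xn n t ω - X t ω‖ ^ 2)) ∂P)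
        ≤ C * Gq n := by
    intro n
    have hae : ∀ᵐ ω ∂P,
        (⨆ t ∈ Set.Icc (0:ℝ) T, ENNReal.ofReal (‖Xn n t ω - X t ω‖ ^ 2))
          ≤ ENNReal.ofReal (Real.exp (LF * T) ^ 2) * ENNReal.ofReal (g n ω ^ 2) := by
      filter_upwards [heq n] with ω hω
      -- clamp
      set p : ℝ → ℝ := fun t => max 0 (min t T) with hp
      have hpc : Continuous p := continuous_const.max (continuous_id.min continuous_const)
      have hpmem : ∀ t, p t ∈ Set.Icc (0:ℝ) T := by
        intro t
        exact ⟨le_max_left _ _, max_le hT.le (min_le_right t T)⟩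
      have hpeq : ∀ t ∈ Set.Icc (0:ℝ) T, p t = t := by
        intro t ht
        simp [hp, min_eq_left ht.2, max_eq_right ht.1]
      have hDcont : ContinuousOn (fun t => ‖Xn n t ω - X t ω‖) (Set.Icc (0:ℝ) T) :=
        ((hXncont n ω).sub (hXcont ω)).norm
      set φc : ℝ → ℝ := fun t => ‖Xn n (p t) ω - X (p t) ω‖ with hφcdef
      have hφcc : Continuous φc := hDcont.comp_continuous hpc hpmem
      have hφceq : ∀ t ∈ Set.Icc (0:ℝ) T, φc t = ‖Xn n t ω - X t ω‖ := by
        intro t ht; simp only [hφcdef, hpeq t ht]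
      have hφcnn : ∀ t, 0 ≤ φc t := fun t => norm_nonneg _
      -- the integral inequality
      have hineq : ∀ t ∈ Set.Icc (0:ℝ) T,
          φc t ≤ g n ω + LF * ∫ s in (0:ℝ)..t, φc s := by
        intro t ht
        have hb : IntervalIntegrable (fun s => LF * φc s + ψ n ω s) volume 0 t := by
          refine ((continuous_const.mul hφcc).intervalIntegrable 0 t).add ?_
          rw [intervalIntegrable_iff_integrableOn_Ioc_of_le ht.1]
          exact (hψint n ω).mono_set
            (Set.Ioc_subset_Icc_self.trans (Set.Icc_subset_Icc_right ht.2))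
        have hnorm : ‖∫ s in (0:ℝ)..t,
            S (t - s) (F (Xn n s ω) (un n s ω) - F (X s ω) (u s ω))‖
            ≤ |∫ s in (0:ℝ)..t, (LF * φc s + ψ n ω s)| := by
          refine (intervalIntegral.norm_integral_le_of_norm_le ht.1 ?_ hb).trans (le_abs_self _)
          refine Eventually.of_forall fun s hs => ?_
          have hsmem : s ∈ Set.Icc (0:ℝ) T := ⟨hs.1.le, hs.2.trans ht.2⟩
          have hts : t - s ∈ Set.Icc (0:ℝ) T :=
            ⟨sub_nonneg.mpr hs.2, by linarith [hs.1, ht.2]⟩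
          calc ‖S (t - s) (F (Xn n s ω) (un n s ω) - F (X s ω) (u s ω))‖
              ≤ ‖S (t - s)‖ * ‖F (Xn n s ω) (un n s ω) - F (X s ω) (u s ω)‖ :=
                (S (t - s)).le_opNorm _
            _ ≤ 1 * ‖F (Xn n s ω) (un n s ω) - F (X s ω) (u s ω)‖ :=
                mul_le_mul_of_nonneg_right (hSbdd _ hts) (norm_nonneg _)
            _ = ‖(F (Xn n s ω) (un n s ω) - F (X s ω) (un n s ω))
                  + (F (X s ω) (un n s ω) - F (X s ω) (u s ω))‖ := by
                rw [one_mul]; congr 1; abel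
            _ ≤ ‖F (Xn n s ω) (un n s ω) - F (X s ω) (un n s ω)‖ + ψ n ω s :=
                norm_add_le _ _
            _ ≤ LF * ‖Xn n s ω - X s ω‖ + ψ n ω s := by
                have := hFlip (Xn n s ω) (X s ω) (un n s ω); linarith
            _ = LF * φc s + ψ n ω s := by rw [hφceq s hsmem]
        have habs : |∫ s in (0:ℝ)..t, (LF * φc s + ψ n ω s)|
            = ∫ s in (0:ℝ)..t, (LF * φc s + ψ n ω s) := by
          refine abs_of_nonneg (intervalIntegral.integral_nonneg ht.1 fun s hs => ?_)
          have := hφcnn s; have := hψnn n ω s; positivity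
        have hsplit : (∫ s in (0:ℝ)..t, (LF * φc s + ψ n ω s))
            = LF * (∫ s in (0:ℝ)..t, φc s) + ∫ s in (0:ℝ)..t, ψ n ω s := by
          rw [intervalIntegral.integral_add ((hφcc.intervalIntegrable 0 t).const_mul LF)
            (by
              rw [intervalIntegrable_iff_integrableOn_Ioc_of_le ht.1]
              exact (hψint n ω).mono_set
                (Set.Ioc_subset_Icc_self.trans (Set.Icc_subset_Icc_right ht.2))),
            intervalIntegral.integral_const_mul]
        have hψbound : (∫ s in (0:ℝ)..t, ψ n ω s) ≤ g n ω := by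
          rw [intervalIntegral.integral_of_le ht.1]
          refine setIntegral_mono_set (hψint n ω)
            (Eventually.of_forall fun s => hψnn n ω s) ?_
          exact HasSubset.Subset.eventuallyLE
            (Set.Ioc_subset_Icc_self.trans (Set.Icc_subset_Icc_right ht.2))
        calc φc t = ‖Xn n t ω - X t ω‖ := hφceq t ht
          _ = ‖∫ s in (0:ℝ)..t,
                S (t - s) (F (Xn n s ω) (un n s ω) - F (X s ω) (u s ω))‖ := by
              rw [hω t ht]
          _ ≤ |∫ s in (0:ℝ)..t, (LF * φc s + ψ n ω s)| := hnorm
          _ = LF * (∫ s in (0:ℝ)..t, φc s) + ∫ s in (0:ℝ)..t, ψ n ω s := by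
              rw [habs, hsplit]
          _ ≤ g n ω + LF * ∫ s in (0:ℝ)..t, φc s := by linarith [hψbound]
      have hgron := gronwall_aux (hgnn n ω) hLF hφcc (fun t _ => hφcnn t) hineq
      refine iSup₂_le fun t ht => ?_
      have h1 : ‖Xn n t ω - X t ω‖ ≤ g n ω * Real.exp (LF * T) := by
        rw [← hφceq t ht]; exact hgron t ht
      have h2 : ‖Xn n t ω - X t ω‖ ^ 2 ≤ (g n ω * Real.exp (LF * T)) ^ 2 :=
        pow_le_pow_left₀ (norm_nonneg _) h1 2
      refine (ENNReal.ofReal_le_ofReal h2).trans (le_of_eq ?_)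
      rw [← ENNReal.ofReal_mul (by positivity)]
      congr 1; ring
    calc (∫⁻ ω, (⨆ t ∈ Set.Icc (0:ℝ) T, ENNReal.ofReal (‖Xn n t ω - X t ω‖ ^ 2)) ∂P)
        ≤ ∫⁻ ω, ENNReal.ofReal (Real.exp (LF * T) ^ 2) * ENNReal.ofReal (g n ω ^ 2) ∂P :=
          lintegral_mono_ae hae
      _ = C * Gq n := lintegral_const_mul' _ _ ENNReal.ofReal_ne_top
  -- domination for Gq
  set B : Ω → ℝ≥0∞ := fun ω => ENNReal.ofReal (8 * CF ^ 2 * T ^ 2)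
    * (1 + ⨆ t ∈ Set.Icc (0:ℝ) T, ENNReal.ofReal (‖X t ω‖ ^ 2)) with hB
  have hGB : ∀ n ω, ENNReal.ofReal (g n ω ^ 2) ≤ B ω := by
    intro n ω
    obtain ⟨t₀, ht₀, hmax⟩ := isCompact_Icc.exists_isMaxOn
      (Set.nonempty_Icc.mpr hT.le) ((hXcont ω).norm)
    set M : ℝ := ‖X t₀ ω‖ with hM
    have hMnn : 0 ≤ M := norm_nonneg _
    have hgle : g n ω ≤ 2 * CF * (1 + M) * T := by
      have h1 : g n ω ≤ ∫ s in Set.Icc (0:ℝ) T, 2 * CF * (1 + ‖X s ω‖) :=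
        setIntegral_mono_on (hψint n ω) (hDint ω) measurableSet_Icc
          (fun s hs => hψle n ω s)
      have h2 : (∫ s in Set.Icc (0:ℝ) T, 2 * CF * (1 + ‖X s ω‖))
          ≤ ∫ s in Set.Icc (0:ℝ) T, 2 * CF * (1 + M) := by
        refine setIntegral_mono_on (hDint ω) ?_ measurableSet_Icc ?_
        · exact integrableOn_const (by
            rw [Real.volume_Icc]; exact ENNReal.ofReal_ne_top)
        · intro s hs
          have h := hmax hs
          simp only [Set.mem_setOf_eq] at h
          simp only [hM]
          nlinarith [hCF]
      have h3 : (∫ s in Set.Icc (0:ℝ) T, 2 * CF * (1 + M))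
          = 2 * CF * (1 + M) * T := by
        rw [setIntegral_const, Real.volume_real_Icc_of_le hT.le, sub_zero,
          smul_eq_mul, mul_comm]
      linarith
    have hsq : g n ω ^ 2 ≤ 8 * CF ^ 2 * T ^ 2 * (1 + M ^ 2) := by
      have h4 : g n ω ^ 2 ≤ (2 * CF * (1 + M) * T) ^ 2 :=
        pow_le_pow_left₀ (hgnn n ω) hgle 2
      nlinarith [sq_nonneg (M - 1), sq_nonneg T, sq_nonneg CF, hCF, hT]
    calc ENNReal.ofReal (g n ω ^ 2)
        ≤ ENNReal.ofReal (8 * CF ^ 2 * T ^ 2 * (1 + M ^ 2)) :=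
          ENNReal.ofReal_le_ofReal hsq
      _ = ENNReal.ofReal (8 * CF ^ 2 * T ^ 2) * ENNReal.ofReal (1 + M ^ 2) := by
          rw [← ENNReal.ofReal_mul (by positivity)]
      _ ≤ B ω := by
          rw [hB]
          refine mul_le_mul_of_nonneg_left ?_ bot_le
          rw [ENNReal.ofReal_add zero_le_one (by positivity), ENNReal.ofReal_one]
          refine add_le_add le_rfl ?_
          exact le_iSup₂ (f := fun t (_ : t ∈ Set.Icc (0:ℝ) T) =>
            ENNReal.ofReal (‖X t ω‖ ^ 2)) t₀ ht₀
  have hBfin : (∫⁻ ω, B ω ∂P) ≠ ∞ := by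
    rw [hB]
    rw [lintegral_const_mul' _ _ ENNReal.ofReal_ne_top,
      lintegral_add_left measurable_const]
    simp only [lintegral_one, measure_univ, one_mul]
    exact ENNReal.mul_ne_top ENNReal.ofReal_ne_top
      (ENNReal.add_ne_top.mpr ⟨ENNReal.one_ne_top, hXint⟩)
  have hGmeas : ∀ n, Measurable fun ω => ENNReal.ofReal (g n ω ^ 2) := fun n =>
    ((hgm n).measurable.pow_const 2).ennreal_ofReal
  -- main subsequence argument
  refine tendsto_of_subseq_tendsto fun ns hns => ?_
  have hsub : TendstoInMeasure (P.prod μt)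
      (fun k p => un (ns k) p.2 p.1) atTop (fun p => u p.2 p.1) :=
    fun ε hε => (huconv ε hε).comp hns
  obtain ⟨ms, hms, haeconv⟩ := hsub.exists_seq_tendsto_ae
  refine ⟨ms, ?_⟩
  have haeω := Measure.ae_ae_of_ae_prod haeconv
  -- Gq along the subsequence tends to 0
  have hGto : Tendsto (fun k => Gq (ns (ms k))) atTop (𝓝 0) := by
    have h0 : (0 : ℝ≥0∞) = ∫⁻ _ω, (0 : ℝ≥0∞) ∂P := by simp
    rw [h0]
    refine tendsto_lintegral_of_dominated_convergence B (fun k => hGmeas _)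
      (fun k => Eventually.of_forall fun ω => hGB _ ω) hBfin ?_
    filter_upwards [haeω] with ω hω
    have hgto : Tendsto (fun k => g (ns (ms k)) ω) atTop (𝓝 0) := by
      have h00 : (0 : ℝ) = ∫ _s, (0 : ℝ) ∂μt := by simp
      rw [h00]
      refine tendsto_integral_of_dominated_convergence
        (fun s => 2 * CF * (1 + ‖X s ω‖))
        (fun k => (hψm _ ω).aestronglyMeasurable)
        (hDint ω) (fun k => Eventually.of_forall fun s => ?_) ?_
      · rw [Real.norm_of_nonneg (hψnn _ ω s)]; exact hψle _ ω s
      · filter_upwards [hω] with s hs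
        have hc : Continuous fun a : U => F (X s ω) a :=
          hFcont.comp (continuous_const.prodMk continuous_id)
        have h1 : Tendsto (fun k => F (X s ω) (un (ns (ms k)) s ω)) atTop
            (𝓝 (F (X s ω) (u s ω))) := (hc.tendsto _).comp hs
        have h2 := (h1.sub (tendsto_const_nhds (x := F (X s ω) (u s ω)) (f := atTop))).norm
        simpa using h2
    have h3 : Tendsto (fun k => g (ns (ms k)) ω ^ 2) atTop (𝓝 (0 ^ 2)) :=
      hgto.pow 2
    have h4 := (ENNReal.continuous_ofReal.tendsto _).comp h3
    simpa [Function.comp_def] using h4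
  -- squeeze
  have hCto : Tendsto (fun k => C * Gq (ns (ms k))) atTop (𝓝 0) := by
    have := ENNReal.Tendsto.const_mul (a := C) hGto (Or.inr ENNReal.ofReal_ne_top)
    simpa using this
  exact tendsto_of_tendsto_of_tendsto_of_le_of_le tendsto_const_nhds hCto
    (fun k => bot_le) (fun k => hLleG (ns (ms k)))
end

section
/- Let H and U be real separable Hilbert spaces and (Ω, F, P) a probability space. Let 𝒰 be a nonempty set and suppose that to each u ∈ 𝒰 there are associated measurable processes X^u : Ω × [0,∞) → H and u_· : Ω × [0,∞) → U. Let ℓ : H × U → ℝ be measurable and bounded, let φ, v̂ : H → ℝ be measurable with |φ(y)| ≤ C_φ·(1+‖y‖) and |v̂(y)| ≤ C_v·‖y‖ for all y ∈ H, let λ, v̂₀ ∈ ℝ, and let K > 0 be such that E‖X^u_T‖ ≤ K for every u ∈ 𝒰 and every T > 0. For T > 0 set v^T := inf_{u∈𝒰} E[∫_0^T ℓ(X^u_t, u_t) dt + φ(X^u_T)], and assume that for every T > 0 one has v̂₀ = inf_{u∈𝒰} E[∫_0^T (ℓ(X^u_t, u_t) − λ) dt + v̂(X^u_T)]. Then |v^T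 − v̂₀ − λ·T| ≤ C_φ·(1+K) + C_v·K for every T > 0; in particular v^T/T → λ as T → ∞. -/
open MeasureTheory Filter Set
open scoped ENNReal NNReal Topology

/-- Theorem 6.1 (long-time asymptotics of the finite-horizon value function): if
`v^T = inf_u E[∫_0^T ℓ(X^u_t,u_t) dt + φ(X^u_T)]` and, for every horizon `T > 0`,
`v̂₀ = inf_u E[∫_0^T (ℓ(X^u_t,u_t) - λ) dt + v̂(X^u_T)]`, with `ℓ` bounded, `|φ(y)| ≤ C_φ(1+‖y‖)`,
`|v̂(y)| ≤ C_v ‖y‖` and `E‖X^u_T‖ ≤ K` uniformly in `u` and `T`, then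
`|v^T - v̂₀ - λ T| ≤ C_φ(1+K) + C_v K` for every `T > 0`; in particular `v^T / T → λ`. -/
theorem stmt7
    {Ω H U : Type*} {mΩ : MeasurableSpace Ω}
    [NormedAddCommGroup H] [InnerProductSpace ℝ H] [CompleteSpace H] [SecondCountableTopology H]
    [MeasurableSpace H] [BorelSpace H]
    [NormedAddCommGroup U] [InnerProductSpace ℝ U] [CompleteSpace U] [SecondCountableTopology U]
    [MeasurableSpace U] [BorelSpace U]
    (P : Measure Ω) [IsProbabilityMeasure P]
    {𝒰 : Type*} [Nonempty 𝒰]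
    (X : 𝒰 → ℝ → Ω → H) (ctrl : 𝒰 → ℝ → Ω → U)
    (hXmeas : ∀ u, StronglyMeasurable (Function.uncurry (X u)))
    (hctrlmeas : ∀ u, StronglyMeasurable (Function.uncurry (ctrl u)))
    (ℓ : H → U → ℝ) (hℓmeas : Measurable (Function.uncurry ℓ))
    (Mℓ : ℝ) (hℓbdd : ∀ (y : H) (a : U), |ℓ y a| ≤ Mℓ)
    (φ vhat : H → ℝ) (hφmeas : Measurable φ) (hvhatmeas : Measurable vhat)
    (Cφ Cv : ℝ) (hCφ : 0 < Cφ) (hCv : 0 < Cv)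
    (hφ : ∀ y : H, |φ y| ≤ Cφ * (1 + ‖y‖))
    (hvhatgrowth : ∀ y : H, |vhat y| ≤ Cv * ‖y‖)
    (lam vhat0 : ℝ)
    (K : ℝ) (hK : 0 < K)
    (hXbdd : ∀ (u : 𝒰) (T : ℝ), 0 < T →
      ∫⁻ ω, ENNReal.ofReal ‖X u T ω‖ ∂P ≤ ENNReal.ofReal K)
    (vT : ℝ → ℝ)
    (hvT : ∀ T : ℝ, 0 < T →
      vT T = ⨅ u : 𝒰,
        ∫ ω, ((∫ t in Set.Ioc (0:ℝ) T, ℓ (X u t ω) (ctrl u t ω)) + φ (X u T ω)) ∂P)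
    (hvhat0 : ∀ T : ℝ, 0 < T →
      vhat0 = ⨅ u : 𝒰,
        ∫ ω, ((∫ t in Set.Ioc (0:ℝ) T, (ℓ (X u t ω) (ctrl u t ω) - lam)) + vhat (X u T ω)) ∂P) :
    (∀ T : ℝ, 0 < T → |vT T - vhat0 - lam * T| ≤ Cφ * (1 + K) + Cv * K) ∧
    Tendsto (fun T : ℝ => vT T / T) atTop (𝓝 lam) := by

  have hK0 : (0:ℝ) ≤ K := hK.le
  set Δ : ℝ := Cφ * (1 + K) + Cv * K with hΔdef
  -- nonnegativity of Mℓ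
  have hMℓ0 : 0 ≤ Mℓ := le_trans (abs_nonneg _) (hℓbdd 0 0)
  have key : ∀ T : ℝ, 0 < T → |vT T - vhat0 - lam * T| ≤ Δ := by
    intro T hT
    -- section measurability
    have hXT : ∀ u : 𝒰, StronglyMeasurable (fun ω => X u T ω) := fun u =>
      (hXmeas u).comp_measurable (Measurable.prodMk measurable_const measurable_id)
    -- integrability of X at time T
    have hXnn : ∀ u : 𝒰, ∫⁻ ω, (‖X u T ω‖₊ : ℝ≥0∞) ∂P ≤ ENNReal.ofReal K := by
      intro u
      simpa [ofReal_norm_eq_enorm, enorm_eq_nnnorm] using hXbdd u T hT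
    have hXint : ∀ u : 𝒰, Integrable (fun ω => X u T ω) P := fun u =>
      ⟨(hXT u).aestronglyMeasurable, (hXnn u).trans_lt ENNReal.ofReal_lt_top⟩
    have hEnorm : ∀ u : 𝒰, ∫ ω, ‖X u T ω‖ ∂P ≤ K := by
      intro u
      rw [integral_norm_eq_lintegral_enorm (hXT u).aestronglyMeasurable]
      calc (∫⁻ ω, (‖X u T ω‖₊ : ℝ≥0∞) ∂P).toReal
          ≤ (ENNReal.ofReal K).toReal :=
            ENNReal.toReal_mono ENNReal.ofReal_ne_top (hXnn u)
        _ = K := ENNReal.toReal_ofReal hK0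
    have hnormint : ∀ u : 𝒰, Integrable (fun ω => ‖X u T ω‖) P := fun u => (hXint u).norm
    -- the running-cost process
    have hgmeas : ∀ u : 𝒰,
        Measurable (fun p : ℝ × Ω => ℓ (X u p.1 p.2) (ctrl u p.1 p.2)) := by
      intro u
      exact hℓmeas.comp ((hXmeas u).measurable.prodMk (hctrlmeas u).measurable)
    have hgtmeas : ∀ (u : 𝒰) (ω : Ω),
        Measurable (fun t : ℝ => ℓ (X u t ω) (ctrl u t ω)) := by
      intro u ω
      exact (hgmeas u).comp (Measurable.prodMk measurable_id measurable_const)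
    have hvolT : (volume (Set.Ioc (0:ℝ) T)).toReal = T := by
      simp [Real.volume_Ioc, ENNReal.toReal_ofReal hT.le]
    have habsP : ∀ f : Ω → ℝ, |∫ ω, f ω ∂P| ≤ ∫ ω, |f ω| ∂P := fun f => by
      simpa [Real.norm_eq_abs] using norm_integral_le_integral_norm (μ := P) f
    have habsT : ∀ f : ℝ → ℝ,
        |∫ t in Set.Ioc (0:ℝ) T, f t| ≤ ∫ t in Set.Ioc (0:ℝ) T, |f t| := fun f => by
      simpa [Real.norm_eq_abs] using
        norm_integral_le_integral_norm (μ := volume.restrict (Set.Ioc (0:ℝ) T)) f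
    have hgint : ∀ (u : 𝒰) (ω : Ω),
        IntegrableOn (fun t => ℓ (X u t ω) (ctrl u t ω)) (Set.Ioc (0:ℝ) T) volume := by
      intro u ω
      refine Integrable.mono' (integrable_const Mℓ)
        (hgtmeas u ω).aestronglyMeasurable ?_
      exact Filter.Eventually.of_forall fun t => by
        simpa [Real.norm_eq_abs] using hℓbdd (X u t ω) (ctrl u t ω)
    -- pointwise identity for the shifted cost
    have hsub : ∀ (u : 𝒰) (ω : Ω),
        (∫ t in Set.Ioc (0:ℝ) T, (ℓ (X u t ω) (ctrl u t ω) - lam))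
          = (∫ t in Set.Ioc (0:ℝ) T, ℓ (X u t ω) (ctrl u t ω)) - lam * T := by
      intro u ω
      rw [integral_sub (hgint u ω)
        ((integrableOn_const_iff).2 (Or.inr (by simp [Real.volume_Ioc]))),
        setIntegral_const]
      rw [measureReal_def, hvolT, smul_eq_mul]
      ring
    -- the integrated running cost as a function of ω
    set F : 𝒰 → Ω → ℝ := fun u ω => ∫ t in Set.Ioc (0:ℝ) T, ℓ (X u t ω) (ctrl u t ω)
      with hFdef
    have hFmeas : ∀ u : 𝒰, StronglyMeasurable (F u) := by
      intro u
      exact (hgmeas u).stronglyMeasurable.integral_prod_left'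
    have hFbdd : ∀ (u : 𝒰) (ω : Ω), |F u ω| ≤ Mℓ * T := by
      intro u ω
      calc |F u ω| ≤ ∫ t in Set.Ioc (0:ℝ) T, |ℓ (X u t ω) (ctrl u t ω)| := habsT _
        _ ≤ ∫ _t in Set.Ioc (0:ℝ) T, Mℓ := by
            refine integral_mono (hgint u ω).abs
              ((integrableOn_const_iff).2 (Or.inr (by simp [Real.volume_Ioc]))) ?_
            intro t; exact hℓbdd _ _
        _ = Mℓ * T := by rw [setIntegral_const, measureReal_def, hvolT, smul_eq_mul]; ring
    have hFint : ∀ u : 𝒰, Integrable (F u) P := by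
      intro u
      refine Integrable.mono' (integrable_const (Mℓ * T))
        (hFmeas u).aestronglyMeasurable ?_
      exact Filter.Eventually.of_forall fun ω => by
        simpa [Real.norm_eq_abs] using hFbdd u ω
    -- integrability and bounds for the terminal costs
    have hφint : ∀ u : 𝒰, Integrable (fun ω => φ (X u T ω)) P := by
      intro u
      refine Integrable.mono'
        (((integrable_const (1:ℝ)).add (hnormint u)).const_mul Cφ)
        (hφmeas.comp (hXT u).measurable).aestronglyMeasurable
        (Filter.Eventually.of_forall fun ω => by
          simpa [Real.norm_eq_abs] using hφ (X u T ω))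
    have hvhatint : ∀ u : 𝒰, Integrable (fun ω => vhat (X u T ω)) P := by
      intro u
      refine Integrable.mono' ((hnormint u).const_mul Cv)
        (hvhatmeas.comp (hXT u).measurable).aestronglyMeasurable
        (Filter.Eventually.of_forall fun ω => by
          simpa [Real.norm_eq_abs] using hvhatgrowth (X u T ω))
    have hφexp : ∀ u : 𝒰, |∫ ω, φ (X u T ω) ∂P| ≤ Cφ * (1 + K) := by
      intro u
      calc |∫ ω, φ (X u T ω) ∂P| ≤ ∫ ω, |φ (X u T ω)| ∂P := habsP _
        _ ≤ ∫ ω, Cφ * (1 + ‖X u T ω‖) ∂P := by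
            refine integral_mono (hφint u).abs
              (((integrable_const (1:ℝ)).add (hnormint u)).const_mul Cφ) ?_
            intro ω; exact hφ (X u T ω)
        _ = Cφ * (1 + ∫ ω, ‖X u T ω‖ ∂P) := by
            rw [integral_const_mul, integral_add (integrable_const 1) (hnormint u)]
            simp
        _ ≤ Cφ * (1 + K) := by
            have := hEnorm u
            nlinarith [hCφ.le]
    have hvexp : ∀ u : 𝒰, |∫ ω, vhat (X u T ω) ∂P| ≤ Cv * K := by
      intro u
      calc |∫ ω, vhat (X u T ω) ∂P| ≤ ∫ ω, |vhat (X u T ω)| ∂P :=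
            habsP _
        _ ≤ ∫ ω, Cv * ‖X u T ω‖ ∂P := by
            refine integral_mono (hvhatint u).abs ((hnormint u).const_mul Cv) ?_
            intro ω; exact hvhatgrowth (X u T ω)
        _ = Cv * ∫ ω, ‖X u T ω‖ ∂P := integral_const_mul _ _
        _ ≤ Cv * K := by nlinarith [hEnorm u, hCv.le]
    -- define the two objective functionals
    set A : 𝒰 → ℝ := fun u =>
      ∫ ω, ((∫ t in Set.Ioc (0:ℝ) T, ℓ (X u t ω) (ctrl u t ω)) + φ (X u T ω)) ∂P with hAdef
    set B : 𝒰 → ℝ := fun u =>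
      ∫ ω, ((∫ t in Set.Ioc (0:ℝ) T, (ℓ (X u t ω) (ctrl u t ω) - lam)) + vhat (X u T ω)) ∂P
      with hBdef
    have hAeq : ∀ u : 𝒰, A u = (∫ ω, F u ω ∂P) + ∫ ω, φ (X u T ω) ∂P := by
      intro u
      exact integral_add (hFint u) (hφint u)
    have hBeq : ∀ u : 𝒰,
        B u = (∫ ω, F u ω ∂P) - lam * T + ∫ ω, vhat (X u T ω) ∂P := by
      intro u
      have h1 : B u = ∫ ω, ((F u ω + vhat (X u T ω)) - lam * T) ∂P := by
        rw [hBdef]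
        refine integral_congr_ae (Filter.Eventually.of_forall fun ω => ?_)
        show (∫ t in Set.Ioc (0:ℝ) T, (ℓ (X u t ω) (ctrl u t ω) - lam)) + vhat (X u T ω)
            = (F u ω + vhat (X u T ω)) - lam * T
        rw [hsub u ω]; ring
      have hadd : Integrable (fun ω => F u ω + vhat (X u T ω)) P :=
        (hFint u).add (hvhatint u)
      rw [h1, integral_sub hadd (integrable_const (lam * T)),
        integral_add (hFint u) (hvhatint u), integral_const]
      simp [smul_eq_mul]
      ring
    -- the key two-sided comparison
    have hcmp : ∀ u : 𝒰, |A u - (B u + lam * T)| ≤ Δ := by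
      intro u
      have : A u - (B u + lam * T)
          = (∫ ω, φ (X u T ω) ∂P) - ∫ ω, vhat (X u T ω) ∂P := by
        rw [hAeq u, hBeq u]; ring
      rw [this, hΔdef]
      calc |(∫ ω, φ (X u T ω) ∂P) - ∫ ω, vhat (X u T ω) ∂P|
          ≤ |∫ ω, φ (X u T ω) ∂P| + |∫ ω, vhat (X u T ω) ∂P| := abs_sub _ _
        _ ≤ Cφ * (1 + K) + Cv * K := add_le_add (hφexp u) (hvexp u)
    -- lower bounds ⇒ bounded below
    have hFexp : ∀ u : 𝒰, |∫ ω, F u ω ∂P| ≤ Mℓ * T := by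
      intro u
      calc |∫ ω, F u ω ∂P| ≤ ∫ ω, |F u ω| ∂P := habsP _
        _ ≤ ∫ _ω, Mℓ * T ∂P := by
            refine integral_mono (hFint u).abs (integrable_const _) ?_
            intro ω; exact hFbdd u ω
        _ = Mℓ * T := by simp
    have hAbdd : BddBelow (Set.range A) := by
      refine ⟨-(Mℓ * T + Cφ * (1 + K)), ?_⟩
      rintro x ⟨u, rfl⟩
      have h1 := (abs_le.1 (hFexp u)).1
      have h2 := (abs_le.1 (hφexp u)).1
      rw [hAeq u]; linarith
    have hBbdd : BddBelow (Set.range B) := by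
      refine ⟨-(Mℓ * T + |lam * T| + Cv * K), ?_⟩
      rintro x ⟨u, rfl⟩
      have h1 := (abs_le.1 (hFexp u)).1
      have h2 := (abs_le.1 (hvexp u)).1
      have h3 : lam * T ≤ |lam * T| := le_abs_self _
      rw [hBeq u]; linarith
    -- compare the infima
    have hvTeq : vT T = ⨅ u : 𝒰, A u := hvT T hT
    have hv0eq : vhat0 = ⨅ u : 𝒰, B u := hvhat0 T hT
    have hup : vT T ≤ vhat0 + lam * T + Δ := by
      rw [hvTeq, hv0eq]
      have h : ∀ u : 𝒰, (⨅ u : 𝒰, A u) - (lam * T + Δ) ≤ B u := by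
        intro u
        have hA : (⨅ u : 𝒰, A u) ≤ A u := ciInf_le hAbdd u
        have h1 := (abs_le.1 (hcmp u)).1
        have h2 := (abs_le.1 (hcmp u)).2
        linarith
      have := le_ciInf h
      linarith
    have hlow : vhat0 + lam * T - Δ ≤ vT T := by
      rw [hvTeq, hv0eq]
      have h : ∀ u : 𝒰, (⨅ u : 𝒰, B u) + lam * T - Δ ≤ A u := by
        intro u
        have hB : (⨅ u : 𝒰, B u) ≤ B u := ciInf_le hBbdd u
        have h1 := (abs_le.1 (hcmp u)).1
        have h2 := (abs_le.1 (hcmp u)).2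
        linarith
      have := le_ciInf h
      linarith
    rw [abs_le]; constructor <;> linarith
  refine ⟨key, ?_⟩
  have hΔ0 : 0 ≤ Δ := by rw [hΔdef]; nlinarith [hCφ.le, hCv.le, hK0]
  rw [← tendsto_sub_nhds_zero_iff]
  refine squeeze_zero_norm' (a := fun T => (|vhat0| + Δ) / T) ?_ ?_
  · filter_upwards [eventually_gt_atTop (0:ℝ)] with T hT
    have h := key T hT
    have h1 : |vT T - lam * T| ≤ |vhat0| + Δ := by
      have := abs_sub_abs_le_abs_sub (vT T - lam * T) vhat0
      have h2 : |vT T - lam * T - vhat0| ≤ Δ := by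
        have : vT T - lam * T - vhat0 = vT T - vhat0 - lam * T := by ring
        rw [this]; exact h
      calc |vT T - lam * T| ≤ |vT T - lam * T - vhat0| + |vhat0| := by
            have := abs_add_le (vT T - lam * T - vhat0) vhat0
            simpa using this
        _ ≤ |vhat0| + Δ := by linarith
    have hTne : T ≠ 0 := ne_of_gt hT
    have : vT T / T - lam = (vT T - lam * T) / T := by field_simp
    rw [Real.norm_eq_abs, this, abs_div, abs_of_pos hT]
    gcongr
  · exact Tendsto.div_atTop tendsto_const_nhds tendsto_id
end
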